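/- arXiv:1402.2952 — 13 statements merged into one kernel-verified Lean document; each statement's English description precedes it below -/
import Mathlib

section
/- Let H be a real Hilbert space, V a closed subspace of H with orthogonal projection P : H → V, and let v ∈ H with Pv ≠ 0 (equivalently ∠(v,V⊥) > 0). Let φ ∈ [0, π] satisfy φ < ∠(v,V⊥), set α = cos φ and α₁ = √((cos²φ − cos²∠(v,V⊥))/(1 − cos²∠(v,V⊥))) (with α₁ = cos φ when ∠(v,V⊥) > π/2, i.e. when the formula does not apply). Then for every u ∈ H, if ⟨u, v⟩ ≥ α‖u‖‖v‖ then ⟨Pu, Pv⟩ ≥ α₁‖Pu‖‖Pv‖. -/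
open scoped RealInnerProductSpace

set_option maxHeartbeats 2000000 in
/-- Let `H` be a real Hilbert space, `V` a closed subspace with orthogonal
projection `P : H → V`, and `v ∈ H` with `P v ≠ 0`.  Let `φ ∈ [0, π]` satisfy
`φ < ∠(v, V⊥) = arccos (‖v - P v‖ / ‖v‖)`, set `α = cos φ` and
`α₁ = √((cos² φ - cos² ∠(v,V⊥)) / (1 - cos² ∠(v,V⊥)))` (with `α₁ = cos φ` when
`∠(v,V⊥) > π/2`).  Then for every `u ∈ H`, if `⟨u, v⟩ ≥ α ‖u‖ ‖v‖` then
`⟨P u, P v⟩ ≥ α₁ ‖P u‖ ‖P v‖`. -/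
theorem stmt0 {H : Type*} [NormedAddCommGroup H] [InnerProductSpace ℝ H] [CompleteSpace H]
    (V : Submodule ℝ H) [CompleteSpace V]
    (v : H) (hPv : (V.orthogonalProjectionOnto v : H) ≠ 0)
    (ψ : ℝ) (hψ : ψ = Real.arccos (‖v - (V.orthogonalProjectionOnto v : H)‖ / ‖v‖))
    (φ : ℝ) (hφ0 : 0 ≤ φ) (hφπ : φ ≤ Real.pi) (hφψ : φ < ψ)
    (α α₁ : ℝ) (hα : α = Real.cos φ)
    (hα₁ : α₁ = if ψ ≤ Real.pi / 2 then
        Real.sqrt ((Real.cos φ ^ 2 - Real.cos ψ ^ 2) / (1 - Real.cos ψ ^ 2))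
      else Real.cos φ)
    (u : H) (hu : ⟪u, v⟫ ≥ α * (‖u‖ * ‖v‖)) :
    ⟪(V.orthogonalProjectionOnto u : H), (V.orthogonalProjectionOnto v : H)⟫ ≥
      α₁ * (‖(V.orthogonalProjectionOnto u : H)‖ * ‖(V.orthogonalProjectionOnto v : H)‖) := by
  set pu : H := (V.orthogonalProjectionOnto u : H) with hpu
  set pv : H := (V.orthogonalProjectionOnto v : H) with hpvdef
  have hv0 : v ≠ 0 := by
    rintro rfl
    simp [hpvdef] at hPv
  have hnv : (0:ℝ) < ‖v‖ := norm_pos_iff.mpr hv0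
  set wu : H := u - pu with hwud
  set wv : H := v - pv with hwvd
  have hwu : wu ∈ Vᗮ := V.sub_starProjection_mem_orthogonal u
  have hwv : wv ∈ Vᗮ := V.sub_starProjection_mem_orthogonal v
  have hpuV : pu ∈ V := (V.orthogonalProjectionOnto u).2
  have hpvV : pv ∈ V := (V.orthogonalProjectionOnto v).2
  have h1 : ⟪pu, wv⟫ = 0 := Submodule.inner_right_of_mem_orthogonal hpuV hwv
  have h2 : ⟪wu, pv⟫ = 0 := by
    rw [real_inner_comm]; exact Submodule.inner_right_of_mem_orthogonal hpvV hwu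
  have h3 : ⟪pu, wu⟫ = 0 := Submodule.inner_right_of_mem_orthogonal hpuV hwu
  have h4 : ⟪pv, wv⟫ = 0 := Submodule.inner_right_of_mem_orthogonal hpvV hwv
  have hu' : u = pu + wu := by rw [hwud]; abel
  have hv' : v = pv + wv := by rw [hwvd]; abel
  have hdecomp : ⟪u, v⟫ = ⟪pu, pv⟫ + ⟪wu, wv⟫ := by
    conv_lhs => rw [hu', hv']
    rw [inner_add_left, inner_add_right, inner_add_right, h1, h2]
    ring
  set a := ‖pu‖ with ha'
  set b := ‖wu‖ with hb'
  set c := ‖pv‖ with hc'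
  set d := ‖wv‖ with hd'
  have hPyu : ‖u‖ ^ 2 = a ^ 2 + b ^ 2 := by
    conv_lhs => rw [hu']
    rw [norm_add_sq_real, h3]; ring
  have hPyv : ‖v‖ ^ 2 = c ^ 2 + d ^ 2 := by
    conv_lhs => rw [hv']
    rw [norm_add_sq_real, h4]; ring
  have ha0 : 0 ≤ a := norm_nonneg _
  have hb0 : 0 ≤ b := norm_nonneg _
  have hc0 : 0 < c := norm_pos_iff.mpr hPv
  have hd0 : 0 ≤ d := norm_nonneg _
  set β := d / ‖v‖ with hβ'
  have hβ0 : 0 ≤ β := div_nonneg hd0 hnv.le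
  have hβ1 : β ≤ 1 := by
    rw [hβ', div_le_one hnv]
    nlinarith [hPyv, sq_nonneg c]
  have hcosψ : Real.cos ψ = β := by
    rw [hψ]; exact Real.cos_arccos (by linarith) hβ1
  have hψhalf : ψ ≤ Real.pi / 2 := by
    rw [hψ]
    exact Real.arccos_le_pi_div_two.mpr hβ0
  have hαβ : β < α := by
    rw [hα, ← hcosψ]
    apply Real.cos_lt_cos_of_nonneg_of_le_pi hφ0 _ hφψ
    linarith [Real.pi_pos]
  have hα0 : 0 < α := lt_of_le_of_lt hβ0 hαβ
  have hβlt1 : β < 1 := lt_of_lt_of_le hαβ (by rw [hα]; exact Real.cos_le_one φ)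
  set s := Real.sqrt (1 - β ^ 2) with hs'
  set t := Real.sqrt (α ^ 2 - β ^ 2) with ht'
  have hs2 : s ^ 2 = 1 - β ^ 2 := Real.sq_sqrt (by nlinarith)
  have ht2 : t ^ 2 = α ^ 2 - β ^ 2 := Real.sq_sqrt (by nlinarith)
  have hs0 : 0 < s := Real.sqrt_pos.mpr (by nlinarith)
  have ht0 : 0 ≤ t := Real.sqrt_nonneg _
  have hα₁' : α₁ = t / s := by
    rw [hα₁, if_pos hψhalf, hcosψ, ← hα, ht', hs', Real.sqrt_div (by nlinarith)]
  -- key scalar inequality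
  have hd : d = β * ‖v‖ := by
    rw [hβ']; field_simp
  have hdv : d ^ 2 = β ^ 2 * ‖v‖ ^ 2 := by rw [hd]; ring
  have hcv : c = s * ‖v‖ := by
    have h1 : c ^ 2 = (s * ‖v‖) ^ 2 := by
      rw [mul_pow, hs2]
      linear_combination -hPyv - hdv
    have h2 : (0:ℝ) ≤ s * ‖v‖ := by positivity
    calc c = Real.sqrt (c ^ 2) := (Real.sqrt_sq hc0.le).symm
      _ = Real.sqrt ((s * ‖v‖) ^ 2) := by rw [h1]
      _ = s * ‖v‖ := Real.sqrt_sq h2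
  have hnu : ‖u‖ ^ 2 = a ^ 2 + b ^ 2 := hPyu
  have hkey : b * β + t * a ≤ α * ‖u‖ := by
    have hnu0 : 0 ≤ ‖u‖ := norm_nonneg _
    have hsq : (b * β + t * a) ^ 2 ≤ (α * ‖u‖) ^ 2 := by
      have e : (α * ‖u‖) ^ 2 = (t ^ 2 + β ^ 2) * (a ^ 2 + b ^ 2) := by
        rw [mul_pow, hnu, ht2]; ring
      have hid : (t ^ 2 + β ^ 2) * (a ^ 2 + b ^ 2) - (b * β + t * a) ^ 2
          = (b * t - a * β) ^ 2 := by ring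
      rw [e]
      linarith [sq_nonneg (b * t - a * β), hid]
    have hl : 0 ≤ b * β + t * a := by positivity
    have hr : 0 ≤ α * ‖u‖ := by positivity
    calc b * β + t * a = Real.sqrt ((b * β + t * a) ^ 2) := (Real.sqrt_sq hl).symm
      _ ≤ Real.sqrt ((α * ‖u‖) ^ 2) := Real.sqrt_le_sqrt hsq
      _ = α * ‖u‖ := Real.sqrt_sq hr
  have hCS : ⟪wu, wv⟫ ≤ b * d := real_inner_le_norm wu wv
  have hlow : ⟪pu, pv⟫ ≥ α * (‖u‖ * ‖v‖) - b * d := by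
    have := hu
    rw [hdecomp] at this
    linarith
  have hrhs : α₁ * (a * c) = t * a * ‖v‖ := by
    rw [hα₁', hcv]
    field_simp
  rw [hrhs]
  have heq : α * (‖u‖ * ‖v‖) - b * d - t * a * ‖v‖ = (α * ‖u‖ - b * β - t * a) * ‖v‖ := by
    rw [hd]; ring
  have hpos : 0 ≤ (α * ‖u‖ - b * β - t * a) * ‖v‖ :=
    mul_nonneg (by linarith) hnv.le
  linarith
end

section
/- Let H be a real Hilbert space, V a closed subspace of H with dim V ≥ 2 and orthogonal projection P : H → V, and let v ∈ H with v ≠ 0 and φ ∈ [0, π] with φ < ∠(v,V⊥). Set α = cos φ and α₁ = √((cos²φ − cos²∠(v,V⊥))/(1 − cos²∠(v,V⊥))) when ∠(v,V⊥) ∈ (0, π/2], and α₁ = cos φ otherwise. Then there exists u ∈ H such that Pu ≠ 0, ⟨u, v⟩ ≥ α‖u‖‖v‖, and ⟨Pu, Pv⟩ = α₁‖Pu‖‖Pv‖. In particular, α₁ is the largest constant for which the implication ⟨u,v⟩ ≥ α‖u‖‖v‖ ⟹ ⟨Pu,Pv⟩ ≥ α₁‖Pu‖‖Pv‖ can hold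 for all u. -/
open scoped RealInnerProductSpace

set_option maxHeartbeats 1600000

/-- If `dim V ≥ 2`, `v ≠ 0` and `0 ≤ φ < ∠(v,V⊥)`, with `α = cos φ` and
`α₁ = √((cos²φ - cos²∠(v,V⊥))/(1 - cos²∠(v,V⊥)))` when `∠(v,V⊥) ∈ (0, π/2]` and
`α₁ = cos φ` otherwise, then there exists `u` with `P u ≠ 0`, `⟨u,v⟩ ≥ α ‖u‖ ‖v‖` and
`⟨P u, P v⟩ = α₁ ‖P u‖ ‖P v‖`; so `α₁` is optimal in Statement 0. -/
theorem stmt1 {H : Type*} [NormedAddCommGroup H] [InnerProductSpace ℝ H] [CompleteSpace H]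
    (V : Submodule ℝ H) [CompleteSpace V] (hV : 2 ≤ Module.rank ℝ V)
    (v : H) (hv : v ≠ 0)
    (ψ : ℝ) (hψ : ψ = Real.arccos (‖v - (V.orthogonalProjection v : H)‖ / ‖v‖))
    (φ : ℝ) (hφ0 : 0 ≤ φ) (hφπ : φ ≤ Real.pi) (hφψ : φ < ψ)
    (α α₁ : ℝ) (hα : α = Real.cos φ)
    (hα₁ : α₁ = if 0 < ψ ∧ ψ ≤ Real.pi / 2 then
        Real.sqrt ((Real.cos φ ^ 2 - Real.cos ψ ^ 2) / (1 - Real.cos ψ ^ 2))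
      else Real.cos φ) :
    ∃ u : H, (V.orthogonalProjection u : H) ≠ 0 ∧
      ⟪u, v⟫ ≥ α * (‖u‖ * ‖v‖) ∧
      ⟪(V.orthogonalProjection u : H), (V.orthogonalProjection v : H)⟫ =
        α₁ * (‖(V.orthogonalProjection u : H)‖ * ‖(V.orthogonalProjection v : H)‖) := by
  have hv0 : (0:ℝ) < ‖v‖ := norm_pos_iff.mpr hv
  set p : H := (V.orthogonalProjection v : H) with hp_def
  have hp : p ∈ V := (V.orthogonalProjection v).2
  set w : H := v - p with hw_def
  have hvpw : v = p + w := by simp [hw_def]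
  have hw : w ∈ Vᗮ := V.sub_starProjection_mem_orthogonal v
  have hpw : ⟪p, w⟫ = 0 := hw p hp
  have hpyth : ‖v‖^2 = ‖p‖^2 + ‖w‖^2 := by
    rw [hvpw, @norm_add_sq_real]; rw [hpw]; ring
  -- ratio bounds
  have hr0 : 0 ≤ ‖w‖ / ‖v‖ := by positivity
  have hr1 : ‖w‖ / ‖v‖ ≤ 1 := by
    rw [div_le_one hv0]
    nlinarith [norm_nonneg p, norm_nonneg w]
  have hcψ : Real.cos ψ = ‖w‖ / ‖v‖ := by
    rw [hψ, Real.cos_arccos (by linarith) hr1]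
  have hψpos : 0 < ψ := lt_of_le_of_lt hφ0 hφψ
  have hψle : ψ ≤ Real.pi / 2 := by
    rw [hψ]; exact Real.arccos_le_pi_div_two.mpr hr0
  have hψπ : ψ ≤ Real.pi := hψle.trans (by linarith [Real.pi_pos])
  have hcoslt : Real.cos ψ < Real.cos φ :=
    Real.strictAntiOn_cos ⟨hφ0, hφπ⟩ ⟨hψpos.le, hψπ⟩ hφψ
  have hcψ0 : 0 ≤ Real.cos ψ := hcψ ▸ hr0
  have hcφpos : 0 < Real.cos φ := lt_of_le_of_lt hcψ0 hcoslt
  have hcφ1 : Real.cos φ ≤ 1 := Real.cos_le_one φ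
  have hcψlt1 : Real.cos ψ < 1 := lt_of_lt_of_le hcoslt hcφ1
  have hden : 0 < 1 - Real.cos ψ ^ 2 := by nlinarith
  have hnum : 0 < Real.cos φ ^ 2 - Real.cos ψ ^ 2 := by nlinarith
  have hα₁' : α₁ = Real.sqrt ((Real.cos φ ^ 2 - Real.cos ψ ^ 2) / (1 - Real.cos ψ ^ 2)) := by
    rw [hα₁, if_pos ⟨hψpos, hψle⟩]
  have hα₁pos : 0 < α₁ := by
    rw [hα₁']; exact Real.sqrt_pos.mpr (by positivity)
  have hα₁sq : α₁ ^ 2 = (Real.cos φ ^ 2 - Real.cos ψ ^ 2) / (1 - Real.cos ψ ^ 2) := by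
    rw [hα₁', Real.sq_sqrt (by positivity)]
  have hkey : α₁ ^ 2 * (1 - Real.cos ψ ^ 2) = Real.cos φ ^ 2 - Real.cos ψ ^ 2 := by
    rw [hα₁sq]; field_simp
  have hα₁le : α₁ ^ 2 ≤ 1 := by
    rw [hα₁sq, div_le_one hden]; nlinarith
  -- p ≠ 0
  have hwlt : ‖w‖ < ‖v‖ := by
    have := hcψlt1; rw [hcψ, div_lt_one hv0] at this; exact this
  have hppos : 0 < ‖p‖ := by
    have h2 : ‖w‖^2 < ‖v‖^2 := by
      rw [pow_two, pow_two]; exact mul_self_lt_mul_self (norm_nonneg w) hwlt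
    have h3 : 0 < ‖p‖^2 := by linarith
    rcases (norm_nonneg p).lt_or_eq with h | h
    · exact h
    · rw [← h] at h3; simp at h3
  -- key identity in norm form
  have hcψ2 : Real.cos ψ ^ 2 * ‖v‖ ^ 2 = ‖w‖ ^ 2 := by
    rw [hcψ]; field_simp
  have hkey2 : α₁ ^ 2 * ‖p‖ ^ 2 + ‖w‖ ^ 2 = Real.cos φ ^ 2 * ‖v‖ ^ 2 := by
    linear_combination ‖v‖ ^ 2 * hkey + (α₁ ^ 2 - 1) * hcψ2 - α₁ ^ 2 * hpyth
  -- the orthogonal unit vector e in V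
  obtain ⟨e, heV, hen, hpe⟩ : ∃ e : H, e ∈ V ∧ ‖e‖ = 1 ∧ ⟪p, e⟫ = 0 := by
    set p' : V := ⟨p, hp⟩ with hp'_def
    have hKne : ((ℝ ∙ p')ᗮ : Submodule ℝ V) ≠ ⊥ := by
      intro hbot
      have htop : (ℝ ∙ p') = ⊤ := Submodule.orthogonal_eq_bot_iff.mp hbot
      have h1 : Module.rank ℝ (ℝ ∙ p' : Submodule ℝ V) ≤ 1 := by
        simpa using rank_span_le (R := ℝ) ({p'} : Set V)
      rw [htop] at h1
      rw [rank_top] at h1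
      exact absurd (hV.trans h1) (by norm_num)
    obtain ⟨x, hxK, hx0⟩ := (Submodule.ne_bot_iff _).mp hKne
    have hxp : ⟪p', x⟫ = 0 := hxK p' (Submodule.mem_span_singleton_self p')
    have hxH : (x : H) ≠ 0 := fun h => hx0 (by exact_mod_cast h)
    refine ⟨‖(x:H)‖⁻¹ • (x:H), V.smul_mem _ x.2, norm_smul_inv_norm hxH, ?_⟩
    rw [real_inner_smul_right]
    have : ⟪p, (x:H)⟫ = 0 := hxp
    rw [this, mul_zero]
  have hep : ⟪e, p⟫ = 0 := by rw [real_inner_comm]; exact hpe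
  have hew : ⟪e, w⟫ = 0 := hw e heV
  have hwp : ⟪w, p⟫ = 0 := by rw [real_inner_comm]; exact hpw
  have hwe : ⟪w, e⟫ = 0 := by rw [real_inner_comm]; exact hew
  have hpp : ⟪p, p⟫ = ‖p‖^2 := real_inner_self_eq_norm_sq p
  have hee : ⟪e, e⟫ = 1 := by rw [real_inner_self_eq_norm_sq, hen]; norm_num
  have hww : ⟪w, w⟫ = ‖w‖^2 := real_inner_self_eq_norm_sq w
  -- β
  set β : ℝ := Real.sqrt (1 - α₁ ^ 2) with hβ_def
  have hβsq : α₁ ^ 2 + β ^ 2 = 1 := by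
    rw [hβ_def, Real.sq_sqrt (by linarith)]; ring
  -- the witness
  set q : H := α₁ ^ 2 • p + (α₁ * β * ‖p‖) • e with hq_def
  set u : H := ‖v‖⁻¹ • (q + w) with hu_def
  have hqV : q ∈ V := V.add_mem (V.smul_mem _ hp) (V.smul_mem _ heV)
  -- projection of u
  have hPu : (V.orthogonalProjection u : H) = ‖v‖⁻¹ • q := by
    have h1 : u = ‖v‖⁻¹ • q + ‖v‖⁻¹ • w := by rw [hu_def, smul_add]
    rw [h1, map_add]
    have h2 : V.orthogonalProjection (‖v‖⁻¹ • w) = 0 :=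
      Submodule.orthogonalProjectionOnto_apply_of_mem_orthogonal
        (Submodule.smul_mem _ _ hw)
    have h3 : (V.orthogonalProjection (‖v‖⁻¹ • q) : H) = ‖v‖⁻¹ • q :=
      Submodule.starProjection_eq_self_iff.mpr (V.smul_mem _ hqV)
    rw [h2]
    push_cast
    rw [h3]; simp
  -- inner products with q
  have hqq : ⟪q, q⟫ = α₁ ^ 2 * ‖p‖ ^ 2 := by
    simp only [hq_def, inner_add_left, inner_add_right, real_inner_smul_left,
      real_inner_smul_right, hpp, hee, hpe, hep]
    linear_combination (α₁ ^ 2 * ‖p‖ ^ 2) * hβsq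
  have hqp : ⟪q, p⟫ = α₁ ^ 2 * ‖p‖ ^ 2 := by
    simp only [hq_def, inner_add_left, real_inner_smul_left, hpp, hep]
    ring
  -- norms
  have hnq : ‖q‖ = α₁ * ‖p‖ := by
    have h1 : ‖q‖ ^ 2 = (α₁ * ‖p‖) ^ 2 := by
      rw [← real_inner_self_eq_norm_sq, hqq]; ring
    have := congrArg Real.sqrt h1
    rwa [Real.sqrt_sq (norm_nonneg q), Real.sqrt_sq (by positivity)] at this
  have hnqw : ‖q + w‖ = Real.cos φ * ‖v‖ := by
    have h1 : ‖q + w‖ ^ 2 = (Real.cos φ * ‖v‖) ^ 2 := by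
      rw [@norm_add_sq_real]
      have hqw : ⟪q, w⟫ = 0 := by
        simp only [hq_def, inner_add_left, real_inner_smul_left, hpw, hew]; ring
      rw [hqw, hnq]
      linear_combination hkey2
    have := congrArg Real.sqrt h1
    rwa [Real.sqrt_sq (norm_nonneg _), Real.sqrt_sq (by positivity)] at this
  have hnu : ‖u‖ = Real.cos φ := by
    rw [hu_def, norm_smul, hnqw, norm_inv, norm_norm]
    field_simp
  have hnPu : ‖(V.orthogonalProjection u : H)‖ = ‖v‖⁻¹ * (α₁ * ‖p‖) := by
    rw [hPu, norm_smul, hnq, norm_inv, norm_norm]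
  refine ⟨u, ?_, ?_, ?_⟩
  · rw [← norm_ne_zero_iff, hnPu]
    positivity
  · -- inner u v
    have hiu : ⟪u, v⟫ = ‖v‖⁻¹ * (α₁ ^ 2 * ‖p‖ ^ 2 + ‖w‖ ^ 2) := by
      rw [hu_def, real_inner_smul_left]
      congr 1
      rw [hvpw, inner_add_left, inner_add_right, inner_add_right, hqp]
      have hqw : ⟪q, w⟫ = 0 := by
        simp only [hq_def, inner_add_left, real_inner_smul_left, hpw, hew]; ring
      rw [hqw, hwp, hww]; ring
    rw [hiu, hα, hnu, hkey2]
    rw [ge_iff_le]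
    apply le_of_eq
    field_simp
  · rw [hnPu, hPu, real_inner_smul_left, hqp]
    ring
end

section
/- Let H be a real Hilbert space, V a closed subspace of H with dim V ≥ 1 and V ≠ H, and P : H → V the orthogonal projection. Let v ∈ H, v ≠ 0, and let φ ∈ (∠(v,V⊥), π], with α = cos φ. Then there exists u ∈ H such that Pu ≠ 0, ⟨u, v⟩ ≥ α‖u‖‖v‖, and ⟨Pu, Pv⟩ = −‖Pu‖‖Pv‖. -/
open scoped RealInnerProductSpace

set_option maxHeartbeats 1600000 in
/-- If `dim V ≥ 1`, `V ≠ H`, `v ≠ 0` and `φ ∈ (∠(v,V⊥), π]`, `α = cos φ`,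
then there exists `u` with `P u ≠ 0`, `⟨u,v⟩ ≥ α ‖u‖ ‖v‖` and
`⟨P u, P v⟩ = -‖P u‖ ‖P v‖`. -/
theorem stmt2 {H : Type*} [NormedAddCommGroup H] [InnerProductSpace ℝ H] [CompleteSpace H]
    (V : Submodule ℝ H) [CompleteSpace V] (hV1 : V ≠ ⊥) (hV2 : V ≠ ⊤)
    (v : H) (hv : v ≠ 0)
    (ψ : ℝ) (hψ : ψ = Real.arccos (‖v - (V.orthogonalProjectionOnto v : H)‖ / ‖v‖))
    (φ : ℝ) (hφψ : ψ < φ) (hφπ : φ ≤ Real.pi)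
    (α : ℝ) (hα : α = Real.cos φ) :
    ∃ u : H, (V.orthogonalProjectionOnto u : H) ≠ 0 ∧
      ⟪u, v⟫ ≥ α * (‖u‖ * ‖v‖) ∧
      ⟪(V.orthogonalProjectionOnto u : H), (V.orthogonalProjectionOnto v : H)⟫ =
        -(‖(V.orthogonalProjectionOnto u : H)‖ * ‖(V.orthogonalProjectionOnto v : H)‖) := by
  have hvn : (0:ℝ) < ‖v‖ := norm_pos_iff.mpr hv
  set p : H := (V.orthogonalProjectionOnto v : H) with hp
  set w : H := v - p with hw
  have hwmem : w ∈ Vᗮ := Submodule.sub_starProjection_mem_orthogonal (K := V) v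
  have hpmem : p ∈ V := (V.orthogonalProjectionOnto v).2
  have hpw : ⟪p, w⟫ = 0 := hwmem p hpmem
  have hvpw : v = p + w := by simp [hw]
  clear_value w
  have hpyth : ‖v‖^2 = ‖p‖^2 + ‖w‖^2 := by
    calc ‖v‖^2 = ‖p + w‖^2 := by rw [← hvpw]
    _ = ‖p‖^2 + 2*⟪p,w⟫ + ‖w‖^2 := by rw [norm_add_sq_real]
    _ = ‖p‖^2 + ‖w‖^2 := by rw [hpw]; ring
  have hwle : ‖w‖ ≤ ‖v‖ := by nlinarith [norm_nonneg w, norm_nonneg p, norm_nonneg v]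
  -- angle facts
  have hratio0 : (0:ℝ) ≤ ‖w‖ / ‖v‖ := by positivity
  have hratio1 : ‖w‖ / ‖v‖ ≤ 1 := by rw [div_le_one hvn]; exact hwle
  have hψ0 : 0 ≤ ψ := hψ ▸ Real.arccos_nonneg _
  have hcosψ : Real.cos ψ = ‖w‖ / ‖v‖ := by
    rw [hψ, Real.cos_arccos (by linarith) hratio1]
  have hsinψ : Real.sin ψ = ‖p‖ / ‖v‖ := by
    rw [hψ, Real.sin_arccos]
    rw [show (1:ℝ) - (‖w‖/‖v‖)^2 = (‖p‖/‖v‖)^2 by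
      field_simp; nlinarith]
    exact Real.sqrt_sq (by positivity)
  -- choose e ∈ V with ‖e‖ = 1 and ⟪e, p⟫ = -‖p‖
  obtain ⟨e, heV, he1, hep⟩ : ∃ e, e ∈ V ∧ ‖e‖ = 1 ∧ ⟪e, p⟫ = -‖p‖ := by
    by_cases hp0 : p = 0
    · obtain ⟨x, hxV, hx0⟩ := Submodule.exists_mem_ne_zero_of_ne_bot hV1
      refine ⟨‖x‖⁻¹ • x, V.smul_mem _ hxV, ?_, by simp [hp0]⟩
      simp [norm_smul, norm_ne_zero_iff.mpr hx0, abs_of_nonneg, inv_mul_cancel₀,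
        (norm_ne_zero_iff.mpr hx0)]
    · have hpn : (0:ℝ) < ‖p‖ := norm_pos_iff.mpr hp0
      refine ⟨(-‖p‖⁻¹) • p, V.smul_mem _ hpmem, ?_, ?_⟩
      · simp [norm_smul, abs_of_pos (inv_pos.mpr hpn), inv_mul_cancel₀ hpn.ne']
      · rw [real_inner_smul_left, real_inner_self_eq_norm_sq]
        field_simp
  -- choose z ∈ Vᗮ with ‖z‖ = 1 and ⟪z, v⟫ = ‖w‖
  obtain ⟨z, hzV, hz1, hzv⟩ : ∃ z, z ∈ Vᗮ ∧ ‖z‖ = 1 ∧ ⟪z, v⟫ = ‖w‖ := by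
    by_cases hw0 : w = 0
    · have : Vᗮ ≠ ⊥ := fun h => hV2 (Submodule.orthogonal_eq_bot_iff.mp h)
      obtain ⟨x, hxV, hx0⟩ := Submodule.exists_mem_ne_zero_of_ne_bot this
      refine ⟨‖x‖⁻¹ • x, Vᗮ.smul_mem _ hxV, ?_, ?_⟩
      · simp [norm_smul, abs_of_nonneg, inv_mul_cancel₀ (norm_ne_zero_iff.mpr hx0)]
      · have : ⟪x, v⟫ = 0 := by
          have := hxV p hpmem
          rw [hvpw, hw0, add_zero, real_inner_comm]; exact this
        rw [real_inner_smul_left, this, hw0]; simp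
    · have hwn : (0:ℝ) < ‖w‖ := norm_pos_iff.mpr hw0
      refine ⟨‖w‖⁻¹ • w, Vᗮ.smul_mem _ hwmem, ?_, ?_⟩
      · simp [norm_smul, abs_of_pos (inv_pos.mpr hwn), inv_mul_cancel₀ hwn.ne']
      · have hwp : ⟪w, p⟫ = 0 := by rw [real_inner_comm]; exact hpw
        rw [real_inner_smul_left, hvpw, inner_add_right, hwp,
          real_inner_self_eq_norm_sq]
        field_simp
        ring
  -- the angle θ
  set θ : ℝ := min (φ - ψ) (Real.pi/2) with hθ
  clear_value θ
  have hθ0 : 0 < θ := by rw [hθ]; exact lt_min (by linarith) (by linarith [Real.pi_pos])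
  have hθhalf : θ ≤ Real.pi/2 := by rw [hθ]; exact min_le_right _ _
  have hsinθ : 0 < Real.sin θ := Real.sin_pos_of_pos_of_lt_pi hθ0 (by linarith [Real.pi_pos])
  have hcosθ : 0 ≤ Real.cos θ := Real.cos_nonneg_of_mem_Icc ⟨by linarith, hθhalf⟩
  have hθψφ : θ + ψ ≤ φ := by
    rcases min_cases (φ - ψ) (Real.pi/2) with ⟨h1, h2⟩ | ⟨h1, h2⟩
    · rw [hθ, h1]; linarith
    · rw [hθ, h1]; linarith
  -- the vector
  set u : H := Real.cos θ • z + Real.sin θ • e with hu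
  clear_value u
  have hze : ⟪z, e⟫ = 0 := by
    have := hzV e heV; rw [real_inner_comm]; exact this
  have hun : ‖u‖ = 1 := by
    have : ‖u‖^2 = 1 := by
      rw [hu, norm_add_sq_real, real_inner_smul_left, real_inner_smul_right, hze,
        norm_smul, norm_smul, hz1, he1]
      simp only [mul_zero, mul_one, Real.norm_eq_abs, mul_pow, sq_abs]
      nlinarith [Real.sin_sq_add_cos_sq θ]
    nlinarith [norm_nonneg u]
  have hPz : V.orthogonalProjectionOnto z = 0 :=
    Submodule.orthogonalProjectionOnto_apply_of_mem_orthogonal hzV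
  have hPe : (V.orthogonalProjectionOnto e : H) = e := Submodule.starProjection_eq_self_iff.mpr heV
  have hPu : (V.orthogonalProjectionOnto u : H) = Real.sin θ • e := by
    rw [hu, map_add, map_smul, map_smul, hPz]
    push_cast [hPe]
    simp
  have hev : ⟪e, v⟫ = -‖p‖ := by
    rw [hvpw, inner_add_right, hep, hwmem e heV]; ring
  refine ⟨u, ?_, ?_, ?_⟩
  · rw [hPu]
    exact smul_ne_zero hsinθ.ne' (by intro h; rw [h] at he1; simp at he1)
  · have huv : ⟪u, v⟫ = Real.cos θ * ‖w‖ - Real.sin θ * ‖p‖ := by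
      rw [hu, inner_add_left, real_inner_smul_left, real_inner_smul_left, hzv, hev]; ring
    have key : Real.cos θ * ‖w‖ - Real.sin θ * ‖p‖ = ‖v‖ * Real.cos (θ + ψ) := by
      rw [Real.cos_add, hcosψ, hsinψ]
      field_simp
    have hmono : Real.cos φ ≤ Real.cos (θ + ψ) :=
      Real.cos_le_cos_of_nonneg_of_le_pi (by linarith) hφπ hθψφ
    rw [ge_iff_le, huv, key, hα, hun]
    nlinarith
  · rw [hPu, real_inner_smul_left, hep, norm_smul, Real.norm_eq_abs,
      abs_of_pos hsinθ, he1]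
    ring
end

section
/- Let H be a real Hilbert space, V a closed subspace with dim V ≥ 2 and P : H → V the orthogonal projection. Let v ∈ H with v ≠ 0 and ∠(v,V⊥) > 0 (i.e. Pv ≠ 0), and let ε ∈ (0, 1]. Then there exists u ∈ H such that Pu ≠ 0, ⟨u, v⟩ ≥ cos∠(v,V⊥) · ‖u‖‖v‖, and ⟨Pu, Pv⟩ = ε‖Pu‖‖Pv‖. -/
open scoped RealInnerProductSpace
set_option maxHeartbeats 1000000

/-- If `dim V ≥ 2`, `v ≠ 0` with `∠(v,V⊥) > 0` and `ε ∈ (0,1]`, then there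
exists `u` with `P u ≠ 0`, `⟨u,v⟩ ≥ cos ∠(v,V⊥) ‖u‖ ‖v‖` and `⟨P u, P v⟩ = ε ‖P u‖ ‖P v‖`. -/
theorem stmt3 {H : Type*} [NormedAddCommGroup H] [InnerProductSpace ℝ H] [CompleteSpace H]
    (V : Submodule ℝ H) [CompleteSpace V] (hV : 2 ≤ Module.rank ℝ V)
    (v : H) (hv : v ≠ 0)
    (ψ : ℝ) (hψ : ψ = Real.arccos (‖v - (V.orthogonalProjection v : H)‖ / ‖v‖))
    (hψ0 : 0 < ψ)
    (ε : ℝ) (hε0 : 0 < ε) (hε1 : ε ≤ 1) :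
    ∃ u : H, (V.orthogonalProjection u : H) ≠ 0 ∧
      ⟪u, v⟫ ≥ Real.cos ψ * (‖u‖ * ‖v‖) ∧
      ⟪(V.orthogonalProjection u : H), (V.orthogonalProjection v : H)⟫ =
        ε * (‖(V.orthogonalProjection u : H)‖ * ‖(V.orthogonalProjection v : H)‖) := by
  set p : H := (V.orthogonalProjection v : H) with hp_def
  set w : H := v - p with hw_def
  have hpV : p ∈ V := (V.orthogonalProjection v).2
  have hwperp : w ∈ Vᗮ := V.sub_starProjection_mem_orthogonal v
  have hw_inner : ∀ x ∈ V, ⟪x, w⟫ = 0 := (Submodule.mem_orthogonal V w).1 hwperp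
  have hpw : ⟪p, w⟫ = 0 := hw_inner p hpV
  have hvpw : v = p + w := by rw [hw_def]; abel
  have hv0 : (0:ℝ) < ‖v‖ := norm_pos_iff.mpr hv
  -- Pythagoras
  have hpyth : ‖v‖^2 = ‖p‖^2 + ‖w‖^2 := by
    calc ‖v‖^2 = ‖p + w‖^2 := by rw [← hvpw]
    _ = ‖p‖^2 + 2 * ⟪p, w⟫ + ‖w‖^2 := norm_add_sq_real p w
    _ = ‖p‖^2 + ‖w‖^2 := by rw [hpw]; ring
  -- w is short
  have hwlt : ‖w‖ < ‖v‖ := by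
    rw [hψ] at hψ0
    have := (Real.arccos_pos).1 hψ0
    rw [div_lt_one hv0] at this
    exact this
  have hp0 : (0:ℝ) < ‖p‖ := by nlinarith [norm_nonneg w, norm_nonneg p]
  have hpne : p ≠ 0 := by intro h; rw [h, norm_zero] at hp0; exact lt_irrefl 0 hp0
  -- find z ∈ V, z ≠ 0, ⟪z, p⟫ = 0
  obtain ⟨z, hzV, hz0, hzp⟩ : ∃ z : H, z ∈ V ∧ z ≠ 0 ∧ ⟪z, p⟫ = 0 := by
    set p' : V := ⟨p, hpV⟩ with hp'_def
    have hne : ((ℝ ∙ p')ᗮ : Submodule ℝ V) ≠ ⊥ := by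
      intro h
      rw [Submodule.orthogonal_eq_bot_iff] at h
      have h1 : Module.rank ℝ (ℝ ∙ p' : Submodule ℝ V) ≤ 1 := by
        simpa using rank_span_le (R := ℝ) ({p'} : Set V)
      rw [h, rank_top] at h1
      exact absurd (hV.trans h1) (by norm_num)
    obtain ⟨z', hz'mem, hz'0⟩ := Submodule.exists_mem_ne_zero_of_ne_bot hne
    refine ⟨(z' : H), z'.2, ?_, ?_⟩
    · simpa using hz'0
    · have := (Submodule.mem_orthogonal _ z').1 hz'mem p' (Submodule.mem_span_singleton_self p')
      have h2 : ⟪p', z'⟫ = 0 := this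
      rw [Submodule.coe_inner] at h2
      rw [real_inner_comm]
      exact h2
  have hz0' : (0:ℝ) < ‖z‖ := norm_pos_iff.mpr hz0
  set c : ℝ := Real.sqrt (1 - ε^2) with hc_def
  have hc0 : 0 ≤ c := Real.sqrt_nonneg _
  have hc2 : c^2 = 1 - ε^2 := Real.sq_sqrt (by nlinarith)
  set a : H := ε • (‖p‖⁻¹ • p) + c • (‖z‖⁻¹ • z) with ha_def
  have haV : a ∈ V := V.add_mem (V.smul_mem _ (V.smul_mem _ hpV)) (V.smul_mem _ (V.smul_mem _ hzV))
  have hap : ⟪a, p⟫ = ε * ‖p‖ := by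
    rw [ha_def]
    rw [inner_add_left, real_inner_smul_left, real_inner_smul_left, real_inner_smul_left,
      real_inner_smul_left, hzp, real_inner_self_eq_norm_sq]
    field_simp
    ring
  have hpz : ⟪p, z⟫ = 0 := by rw [real_inner_comm]; exact hzp
  have hna : ‖a‖^2 = 1 := by
    rw [ha_def, norm_add_sq_real]
    rw [real_inner_smul_left, real_inner_smul_right, real_inner_smul_left, real_inner_smul_right,
      hpz]
    rw [norm_smul, norm_smul, norm_smul, norm_smul]
    simp only [Real.norm_eq_abs, norm_inv, norm_norm, abs_norm]
    rw [abs_of_pos hε0, abs_of_nonneg hc0]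
    field_simp
    rw [hc2]; ring
  have hna1 : ‖a‖ = 1 := by nlinarith [norm_nonneg a]
  have hane : a ≠ 0 := by intro h; rw [h, norm_zero] at hna1; norm_num at hna1
  set t : ℝ := 1 / (2 * ε * ‖p‖) with ht_def
  have ht0 : 0 < t := by positivity
  have ht1 : 2 * t * ε * ‖p‖ = 1 := by rw [ht_def]; field_simp
  clear_value t a c w p
  have hPu : (V.orthogonalProjection (a + t • w) : H) = a := by
    rw [map_add, map_smul, Submodule.orthogonalProjectionOnto_apply_of_mem_orthogonal hwperp,
      smul_zero, add_zero]
    exact V.starProjection_eq_self_iff.mpr haV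
  refine ⟨a + t • w, ?_, ?_, ?_⟩
  · rw [hPu]; exact hane
  · -- the inequality
    have haw : ⟪a, w⟫ = 0 := hw_inner a haV
    have hwp : ⟪w, p⟫ = 0 := by rw [real_inner_comm]; exact hpw
    have hwv : ⟪w, v⟫ = ‖w‖^2 := by
      rw [hvpw, inner_add_right, hwp, real_inner_self_eq_norm_sq, zero_add]
    have hav : ⟪a, v⟫ = ε * ‖p‖ := by rw [hvpw, inner_add_right, hap, haw, add_zero]
    have huv : ⟪a + t • w, v⟫ = ε * ‖p‖ + t * ‖w‖^2 := by
      rw [inner_add_left, real_inner_smul_left, hwv, hav]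
    have hnu : ‖a + t • w‖^2 = 1 + t^2 * ‖w‖^2 := by
      rw [norm_add_sq_real, real_inner_smul_right, haw, norm_smul, hna]
      simp only [Real.norm_eq_abs, abs_of_pos ht0]
      rw [mul_pow]
      ring
    have hcos : Real.cos ψ = ‖w‖ / ‖v‖ := by
      rw [hψ, Real.cos_arccos
        (le_trans (by norm_num : (-1:ℝ) ≤ 0) (by positivity))
        ((div_le_one hv0).mpr hwlt.le)]
    rw [ge_iff_le, huv, hcos]
    have hval : ‖w‖ / ‖v‖ * (‖a + t • w‖ * ‖v‖) = ‖w‖ * ‖a + t • w‖ := by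
      field_simp
    rw [hval]
    have hR : (0:ℝ) ≤ ε * ‖p‖ + t * ‖w‖^2 := by positivity
    have key : (‖w‖ * ‖a + t • w‖)^2 ≤ (ε * ‖p‖ + t * ‖w‖^2)^2 := by
      have h2 : (‖w‖ * ‖a + t • w‖)^2 = ‖w‖^2 * (1 + t^2 * ‖w‖^2) := by
        rw [mul_pow, hnu]
      rw [h2]
      nlinarith [ht1, sq_nonneg (ε * ‖p‖), sq_nonneg (‖w‖)]
    nlinarith [key, mul_nonneg (norm_nonneg w) (norm_nonneg (a + t • w)), hR]
  · rw [hPu, hap, hna1]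
    ring
end

section
/- Let H be a real Hilbert space, V a closed subspace of H with V ≠ H, and P : H → V the orthogonal projection. Let v ∈ H, v ≠ 0, with ∠(v,V⊥) > 0 (i.e. Pv ≠ 0). Then for all u ∈ H, if ⟨u, v⟩ ≥ cos∠(v,V⊥) · ‖u‖‖v‖ then ⟨Pu, Pv⟩ ≥ 0. -/
open scoped RealInnerProductSpace

/-- If `V ≠ H`, `v ≠ 0` with `∠(v,V⊥) > 0`, then for all `u`,
`⟨u,v⟩ ≥ cos ∠(v,V⊥) ‖u‖ ‖v‖` implies `⟨P u, P v⟩ ≥ 0`. -/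
theorem stmt4 {H : Type*} [NormedAddCommGroup H] [InnerProductSpace ℝ H] [CompleteSpace H]
    (V : Submodule ℝ H) [CompleteSpace V] (hV : V ≠ ⊤)
    (v : H) (hv : v ≠ 0)
    (ψ : ℝ) (hψ : ψ = Real.arccos (‖v - (V.orthogonalProjection v : H)‖ / ‖v‖))
    (hψ0 : 0 < ψ) :
    ∀ u : H, ⟪u, v⟫ ≥ Real.cos ψ * (‖u‖ * ‖v‖) →
      ⟪(V.orthogonalProjection u : H), (V.orthogonalProjection v : H)⟫ ≥ 0 := by
  intro u hu
  set P := fun x : H => (V.orthogonalProjection x : H) with hP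
  have hvpos : (0:ℝ) < ‖v‖ := norm_pos_iff.mpr hv
  -- ‖v - P v‖ ≤ ‖v‖
  have hpyth : ∀ x : H, ‖x‖ ^ 2 = ‖P x‖ ^ 2 + ‖x - P x‖ ^ 2 := by
    intro x
    have := V.orthogonalProjectionFn_norm_sq x
    rw [Submodule.orthogonalProjectionFn_eq] at this
    nlinarith [this]
  have hle : ‖v - P v‖ ≤ ‖v‖ := by
    nlinarith [hpyth v, norm_nonneg (P v), norm_nonneg (v - P v), norm_nonneg v]
  have hule : ‖u - P u‖ ≤ ‖u‖ := by
    nlinarith [hpyth u, norm_nonneg (P u), norm_nonneg (u - P u), norm_nonneg u]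
  have hcos : Real.cos ψ = ‖v - P v‖ / ‖v‖ := by
    rw [hψ, Real.cos_arccos]
    · exact le_trans (by norm_num : (-1:ℝ) ≤ 0) (by positivity)
    · exact div_le_one_of_le₀ hle (le_of_lt hvpos)
  -- decompose inner product
  have hdec : ⟪u, v⟫ = ⟪P u, P v⟫ + ⟪u - P u, v - P v⟫ := by
    have h1 : u = P u + (u - P u) := by abel
    have h2 : v = P v + (v - P v) := by abel
    have hcross1 : ⟪P u, v - P v⟫ = 0 :=
      Submodule.inner_right_of_mem_orthogonal (V.orthogonalProjection u).2
        (V.sub_starProjection_mem_orthogonal v)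
    have hcross2 : ⟪u - P u, P v⟫ = 0 := by
      rw [real_inner_comm]
      exact Submodule.inner_right_of_mem_orthogonal (V.orthogonalProjection v).2
        (V.sub_starProjection_mem_orthogonal u)
    calc ⟪u, v⟫ = ⟪P u + (u - P u), P v + (v - P v)⟫ := by rw [← h1, ← h2]
    _ = ⟪P u, P v⟫ + ⟪P u, v - P v⟫ + (⟪u - P u, P v⟫ + ⟪u - P u, v - P v⟫) := by
        simp only [inner_add_left, inner_add_right]; ring
    _ = ⟪P u, P v⟫ + ⟪u - P u, v - P v⟫ := by rw [hcross1, hcross2]; ring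
  have hcauchy : ⟪u - P u, v - P v⟫ ≤ ‖u - P u‖ * ‖v - P v‖ :=
    real_inner_le_norm _ _
  have hbound : ⟪u - P u, v - P v⟫ ≤ ‖u‖ * ‖v - P v‖ := by
    calc ⟪u - P u, v - P v⟫ ≤ ‖u - P u‖ * ‖v - P v‖ := hcauchy
    _ ≤ ‖u‖ * ‖v - P v‖ := by
        apply mul_le_mul_of_nonneg_right hule (norm_nonneg _)
  have hkey : Real.cos ψ * (‖u‖ * ‖v‖) = ‖u‖ * ‖v - P v‖ := by
    rw [hcos]; field_simp
  linarith [hdec, hu, hbound, hkey]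
end

section
/- Let H be a real Hilbert space, V a closed subspace of H with V ≠ H and V ≠ {0}, and P : H → V the orthogonal projection. Let v ∈ H with 0 < ∠(v,V⊥) < π/2 (equivalently Pv ≠ 0 and v − Pv ≠ 0). Then for all u ∈ H, if ⟨u, v⟩ ≥ cos∠(v,V⊥) · ‖u‖‖v‖ and Pu ≠ 0, then ⟨Pu, Pv⟩ > 0. -/
open scoped RealInnerProductSpace

/-- If `V ≠ H`, `V ≠ {0}` and `0 < ∠(v,V⊥) < π/2`, then for all `u`,
if `⟨u,v⟩ ≥ cos ∠(v,V⊥) ‖u‖ ‖v‖` and `P u ≠ 0` then `⟨P u, P v⟩ > 0`. -/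
theorem stmt5 {H : Type*} [NormedAddCommGroup H] [InnerProductSpace ℝ H] [CompleteSpace H]
    (V : Submodule ℝ H) [CompleteSpace V] (hV1 : V ≠ ⊤) (hV2 : V ≠ ⊥)
    (v : H)
    (ψ : ℝ) (hψ : ψ = Real.arccos (‖v - (V.orthogonalProjection v : H)‖ / ‖v‖))
    (hψ0 : 0 < ψ) (hψ2 : ψ < Real.pi / 2) :
    ∀ u : H, ⟪u, v⟫ ≥ Real.cos ψ * (‖u‖ * ‖v‖) →
      (V.orthogonalProjection u : H) ≠ 0 →
      0 < ⟪(V.orthogonalProjection u : H), (V.orthogonalProjection v : H)⟫ := by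
  intro u hu hPu
  set Pv : H := (V.orthogonalProjection v : H) with hPvdef
  set Pu : H := (V.orthogonalProjection u : H) with hPudef
  have hPvV : Pv ∈ V := (V.orthogonalProjection v).2
  have hPuV : Pu ∈ V := (V.orthogonalProjection u).2
  have hqv : v - Pv ∈ Vᗮ := V.sub_starProjection_mem_orthogonal v
  have hqu : u - Pu ∈ Vᗮ := V.sub_starProjection_mem_orthogonal u
  set r : ℝ := ‖v - Pv‖ / ‖v‖ with hrdef
  -- r is positive and less than 1
  have hr_pos : 0 < r := by
    rw [hψ] at hψ2
    exact Real.arccos_lt_pi_div_two.mp hψ2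
  have hr_lt : r < 1 := by
    rw [hψ] at hψ0
    exact Real.arccos_pos.mp hψ0
  have hv_pos : 0 < ‖v‖ := by
    by_contra h
    have : ‖v‖ = 0 := le_antisymm (not_lt.mp h) (norm_nonneg v)
    rw [hrdef, this, div_zero] at hr_pos
    exact lt_irrefl 0 hr_pos
  have hq_pos : 0 < ‖v - Pv‖ := by
    have := mul_pos hr_pos hv_pos
    rwa [hrdef, div_mul_cancel₀ _ (ne_of_gt hv_pos)] at this
  -- Pythagoras for v
  have hvPv : ⟪Pv, v - Pv⟫ = 0 := (Submodule.mem_orthogonal V (v - Pv)).mp hqv Pv hPvV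
  have hpy_v : ‖v‖ ^ 2 = ‖Pv‖ ^ 2 + ‖v - Pv‖ ^ 2 := by
    have := norm_add_sq_real Pv (v - Pv)
    rw [hvPv] at this
    simp only [add_sub_cancel, mul_zero, add_zero] at this
    linarith
  have hr_le : ‖v - Pv‖ ≤ ‖v‖ := by nlinarith [sq_nonneg ‖Pv‖]
  -- cos ψ = r
  have hcos : Real.cos ψ = r := by
    rw [hψ, Real.cos_arccos (le_trans (by norm_num) hr_pos.le)
      ((div_le_one hv_pos).mpr hr_le)]
  -- Pythagoras for u
  have huPu : ⟪Pu, u - Pu⟫ = 0 := (Submodule.mem_orthogonal V (u - Pu)).mp hqu Pu hPuV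
  have hpy_u : ‖u‖ ^ 2 = ‖Pu‖ ^ 2 + ‖u - Pu‖ ^ 2 := by
    have := norm_add_sq_real Pu (u - Pu)
    rw [huPu] at this
    simp only [add_sub_cancel, mul_zero, add_zero] at this
    linarith
  have hPu_pos : 0 < ‖Pu‖ := norm_pos_iff.mpr hPu
  have hlt : ‖u - Pu‖ < ‖u‖ := by
    by_contra h
    push_neg at h
    have h2 := pow_le_pow_left₀ (norm_nonneg u) h 2
    nlinarith
  -- decomposition of inner product
  have h1 : ⟪Pu, v - Pv⟫ = 0 := (Submodule.mem_orthogonal V (v - Pv)).mp hqv Pu hPuV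
  have h2 : ⟪u - Pu, Pv⟫ = 0 := by
    rw [real_inner_comm]
    exact (Submodule.mem_orthogonal V (u - Pu)).mp hqu Pv hPvV
  have hdecomp : ⟪u, v⟫ = ⟪Pu, Pv⟫ + ⟪u - Pu, v - Pv⟫ := by
    have : ⟪Pu + (u - Pu), Pv + (v - Pv)⟫ = ⟪Pu, Pv⟫ + ⟪u - Pu, v - Pv⟫ := by
      rw [inner_add_left, inner_add_right, inner_add_right, h1, h2]
      ring
    simpa using this
  -- Cauchy-Schwarz bound
  have hcs : ⟪u - Pu, v - Pv⟫ ≤ ‖u - Pu‖ * ‖v - Pv‖ := real_inner_le_norm _ _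
  have hbound : ⟪u - Pu, v - Pv⟫ < ‖u‖ * ‖v - Pv‖ := by
    calc ⟪u - Pu, v - Pv⟫ ≤ ‖u - Pu‖ * ‖v - Pv‖ := hcs
      _ < ‖u‖ * ‖v - Pv‖ := by exact mul_lt_mul_of_pos_right hlt hq_pos
  -- conclude
  rw [hcos] at hu
  have hkey : Real.cos ψ * (‖u‖ * ‖v‖) = ‖u‖ * ‖v - Pv‖ := by
    rw [hcos, hrdef]
    field_simp
  have : r * (‖u‖ * ‖v‖) = ‖u‖ * ‖v - Pv‖ := by
    rw [hrdef]; field_simp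
  nlinarith
end

section
/- Let H be a real Hilbert space, V a closed subspace of H with V ≠ H and dim V ≥ 2, and P : H → V the orthogonal projection. Let v ∈ H, v ≠ 0, with ∠(v,V⊥) > 0. Then ∠(v,V⊥) < π/2 if and only if for every u ∈ H: (⟨u, v⟩ ≥ cos∠(v,V⊥) · ‖u‖‖v‖ and Pu ≠ 0) implies ⟨Pu, Pv⟩ > 0. -/
open scoped RealInnerProductSpace

/-- If `V ≠ H`, `dim V ≥ 2`, `v ≠ 0` with `∠(v,V⊥) > 0`, then
`∠(v,V⊥) < π/2` iff for all `u`: (`⟨u,v⟩ ≥ cos ∠(v,V⊥) ‖u‖ ‖v‖` and `P u ≠ 0`)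
implies `⟨P u, P v⟩ > 0`. -/
theorem stmt6 {H : Type*} [NormedAddCommGroup H] [InnerProductSpace ℝ H] [CompleteSpace H]
    (V : Submodule ℝ H) [CompleteSpace V] (hV1 : V ≠ ⊤) (hV2 : 2 ≤ Module.rank ℝ V)
    (v : H) (hv : v ≠ 0)
    (ψ : ℝ) (hψ : ψ = Real.arccos (‖v - (V.orthogonalProjectionOnto v : H)‖ / ‖v‖))
    (hψ0 : 0 < ψ) :
    ψ < Real.pi / 2 ↔
      ∀ u : H, ⟪u, v⟫ ≥ Real.cos ψ * (‖u‖ * ‖v‖) →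
        (V.orthogonalProjectionOnto u : H) ≠ 0 →
        0 < ⟪(V.orthogonalProjectionOnto u : H), (V.orthogonalProjectionOnto v : H)⟫ := by
  have hv0 : (0:ℝ) < ‖v‖ := norm_pos_iff.mpr hv
  -- Pythagoras for any x
  have hpyth : ∀ x : H, ‖x‖^2 = ‖(V.orthogonalProjectionOnto x : H)‖^2
      + ‖x - V.orthogonalProjectionOnto x‖^2 := by
    intro x
    have h0 : ⟪(V.orthogonalProjectionOnto x : H), x - V.orthogonalProjectionOnto x⟫ = 0 :=
      Submodule.inner_right_of_mem_orthogonal (V.orthogonalProjectionOnto x).2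
        (V.sub_starProjection_mem_orthogonal x)
    have hx : (V.orthogonalProjectionOnto x : H) + (x - V.orthogonalProjectionOnto x) = x := by abel
    have hns := norm_add_sq_real (V.orthogonalProjectionOnto x : H) (x - V.orthogonalProjectionOnto x)
    rw [hx, h0] at hns
    linarith
  -- decomposition of inner products
  have hdecomp : ∀ u x : H, ⟪u, x⟫ =
      ⟪(V.orthogonalProjectionOnto u : H), (V.orthogonalProjectionOnto x : H)⟫
      + ⟪u - V.orthogonalProjectionOnto u, x - V.orthogonalProjectionOnto x⟫ := by
    intro u x
    have hu : u = (V.orthogonalProjectionOnto u : H) + (u - V.orthogonalProjectionOnto u) := by abel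
    have hx : x = (V.orthogonalProjectionOnto x : H) + (x - V.orthogonalProjectionOnto x) := by abel
    have h1 : ⟪(V.orthogonalProjectionOnto u : H), x - V.orthogonalProjectionOnto x⟫ = 0 :=
      Submodule.inner_right_of_mem_orthogonal (V.orthogonalProjectionOnto u).2
        (V.sub_starProjection_mem_orthogonal x)
    have h2 : ⟪u - V.orthogonalProjectionOnto u, (V.orthogonalProjectionOnto x : H)⟫ = 0 :=
      (Submodule.inner_left_of_mem_orthogonal (V.orthogonalProjectionOnto x).2
        (V.sub_starProjection_mem_orthogonal u))
    conv_lhs => rw [hu, hx]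
    rw [inner_add_left, inner_add_right, inner_add_right, h1, h2]
    ring
  set t : ℝ := ‖v - (V.orthogonalProjectionOnto v : H)‖ / ‖v‖ with ht
  have ht0 : 0 ≤ t := div_nonneg (norm_nonneg _) (norm_nonneg _)
  have htle : ‖v - (V.orthogonalProjectionOnto v : H)‖ ≤ ‖v‖ := by
    nlinarith [hpyth v, sq_nonneg ‖(V.orthogonalProjectionOnto v : H)‖, norm_nonneg
      (v - (V.orthogonalProjectionOnto v : H)), norm_nonneg v]
  have ht1 : t ≤ 1 := (div_le_one hv0).mpr htle
  have hcos : Real.cos ψ = t := by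
    rw [hψ]; exact Real.cos_arccos (by linarith) ht1
  constructor
  · -- forward
    intro hlt u hu hPu
    have htpos : 0 < t := by
      by_contra h
      have : t = 0 := le_antisymm (not_lt.mp h) ht0
      rw [hψ, this, Real.arccos_zero] at hlt
      exact lt_irrefl _ hlt
    have hQv : 0 < ‖v - (V.orthogonalProjectionOnto v : H)‖ := by
      rcases (lt_or_eq_of_le (norm_nonneg (v - (V.orthogonalProjectionOnto v : H)))) with h1 | h1
      · exact h1
      · exfalso; rw [ht, ← h1] at htpos; simp at htpos
    have hQult : ‖u - V.orthogonalProjectionOnto u‖ < ‖u‖ := by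
      have hPupos : 0 < ‖(V.orthogonalProjectionOnto u : H)‖ := norm_pos_iff.mpr hPu
      nlinarith [hpyth u, norm_nonneg (u - (V.orthogonalProjectionOnto u : H)), norm_nonneg u]
    have hCS : ⟪u - V.orthogonalProjectionOnto u, v - V.orthogonalProjectionOnto v⟫ ≤
        ‖u - V.orthogonalProjectionOnto u‖ * ‖v - V.orthogonalProjectionOnto v‖ :=
      real_inner_le_norm _ _
    have hu' : ‖v - (V.orthogonalProjectionOnto v : H)‖ * ‖u‖ ≤ ⟪u, v⟫ := by
      have : Real.cos ψ * (‖u‖ * ‖v‖) = ‖v - (V.orthogonalProjectionOnto v : H)‖ * ‖u‖ := by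
        rw [hcos, ht]; field_simp
      linarith [this ▸ hu]
    have := hdecomp u v
    nlinarith
  · -- backward, contrapositive
    intro h
    by_contra hge
    -- then t = 0, i.e. v ∈ V
    have htnotpos : ¬ (0 < t) := by
      intro hp
      exact hge (hψ ▸ (Real.arccos_lt_pi_div_two.mpr hp))
    have ht0' : t = 0 := le_antisymm (not_lt.mp htnotpos) ht0
    have hQv0 : v - (V.orthogonalProjectionOnto v : H) = 0 := by
      have : ‖v - (V.orthogonalProjectionOnto v : H)‖ = 0 := by
        have := (div_eq_zero_iff.mp ht0')
        rcases this with h1 | h1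
        · exact h1
        · exact absurd h1 (ne_of_gt hv0)
      exact norm_eq_zero.mp this
    have hvV : v ∈ V := by
      have : (V.orthogonalProjectionOnto v : H) = v := by
        have := sub_eq_zero.mp hQv0; exact this.symm
      rw [← this]; exact (V.orthogonalProjectionOnto v).2
    have hPvv : (V.orthogonalProjectionOnto v : H) = v := (sub_eq_zero.mp hQv0).symm
    -- find w ∈ V nonzero orthogonal to v
    set v' : V := ⟨v, hvV⟩ with hv'
    have hKne : ((ℝ ∙ v')ᗮ : Submodule ℝ V) ≠ ⊥ := by
      intro hK
      haveI : FiniteDimensional ℝ (ℝ ∙ v' : Submodule ℝ V) :=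
        inferInstance
      have htop : (ℝ ∙ v' : Submodule ℝ V) = ⊤ := by
        have := Submodule.orthogonal_orthogonal (ℝ ∙ v' : Submodule ℝ V)
        rw [hK, Submodule.bot_orthogonal_eq_top] at this
        exact this.symm
      have h1 : Module.rank ℝ ↥(ℝ ∙ v' : Submodule ℝ V) ≤ 1 := by
        simpa using rank_span_le (R := ℝ) ({v'} : Set V)
      rw [htop, rank_top] at h1
      exact absurd (le_trans hV2 h1) (by norm_num)
    obtain ⟨w', hw'mem, hw'ne⟩ := Submodule.ne_bot_iff _ |>.mp hKne
    have hwv : ⟪(w' : H), v⟫ = 0 := by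
      have := hw'mem v' (Submodule.mem_span_singleton_self v')
      have h' : ⟪(v' : H), (w' : H)⟫ = 0 := this
      rw [real_inner_comm]; exact h'
    set w : H := (w' : H) with hw
    have hwV : w ∈ V := w'.2
    have hwne : w ≠ 0 := by
      simpa [hw] using fun hh => hw'ne (Subtype.ext hh)
    have hPw : (V.orthogonalProjectionOnto w : H) = w :=
      V.starProjection_eq_self_iff.mpr hwV
    have hcos0 : Real.cos ψ = 0 := by rw [hcos, ht0']
    have := h w (by rw [hcos0]; simp [hwv]) (by rw [hPw]; exact hwne)
    rw [hPw, hPvv, hwv] at this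
    exact lt_irrefl _ this
end

section
/- Let H be a real Hilbert space, V a closed subspace with orthogonal projection P : H → V, v ∈ H, φ ∈ [0, π], and θ ∈ [0, π]. Suppose there exists u ∈ H with ⟨u, v⟩ ≥ cos φ · ‖u‖‖v‖, Pu ≠ 0, and ⟨Pu, Pv⟩ = cos θ · ‖Pu‖‖Pv‖. Then C_V(Pv, θ) ⊆ P[C_H(v, φ)], i.e. every w ∈ V with ⟨w, Pv⟩ ≥ cos θ · ‖w‖‖Pv‖ is the orthogonal projection of some element of C_H(v, φ). -/
open scoped RealInnerProductSpace

/-- Suppose some `u` satisfies `⟨u,v⟩ ≥ cos φ ‖u‖ ‖v‖`, `P u ≠ 0` and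
`⟨P u, P v⟩ = cos θ ‖P u‖ ‖P v‖`.  Then the cone `C_V(P v, θ)` inside `V` is contained in
the image under `P` of the cone `C_H(v, φ)`. -/
theorem stmt7 {H : Type*} [NormedAddCommGroup H] [InnerProductSpace ℝ H] [CompleteSpace H]
    (V : Submodule ℝ H) [CompleteSpace V]
    (v : H) (φ θ : ℝ) (hφ0 : 0 ≤ φ) (hφπ : φ ≤ Real.pi) (hθ0 : 0 ≤ θ) (hθπ : θ ≤ Real.pi)
    (hex : ∃ u : H, ⟪u, v⟫ ≥ Real.cos φ * (‖u‖ * ‖v‖) ∧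
      (Submodule.orthogonalProjectionOnto V u : H) ≠ 0 ∧
      ⟪(Submodule.orthogonalProjectionOnto V u : H), (Submodule.orthogonalProjectionOnto V v : H)⟫ =
        Real.cos θ * (‖(Submodule.orthogonalProjectionOnto V u : H)‖ * ‖(Submodule.orthogonalProjectionOnto V v : H)‖)) :
    {w : H | w ∈ V ∧ ⟪w, (Submodule.orthogonalProjectionOnto V v : H)⟫ ≥
        Real.cos θ * (‖w‖ * ‖(Submodule.orthogonalProjectionOnto V v : H)‖)} ⊆
      (fun u : H => (Submodule.orthogonalProjectionOnto V u : H)) ''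
        {u : H | ⟪u, v⟫ ≥ Real.cos φ * (‖u‖ * ‖v‖)} := by
  obtain ⟨u, hu, hPu, hθu⟩ := hex
  intro w hw
  obtain ⟨hwV, hwin⟩ := hw
  set Pu : H := (Submodule.orthogonalProjectionOnto V u : H) with hPudef
  set Pv : H := (Submodule.orthogonalProjectionOnto V v : H) with hPvdef
  set t : ℝ := ‖w‖ / ‖Pu‖ with ht
  have hPunorm : ‖Pu‖ ≠ 0 := norm_ne_zero_iff.mpr hPu
  have htnn : 0 ≤ t := div_nonneg (norm_nonneg _) (norm_nonneg _)
  have htPu : t * ‖Pu‖ = ‖w‖ := div_mul_cancel₀ _ hPunorm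
  have hperp : u - Pu ∈ Vᗮ := Submodule.sub_starProjection_mem_orthogonal (K := V) u
  have hperpv : v - Pv ∈ Vᗮ := Submodule.sub_starProjection_mem_orthogonal (K := V) v
  -- projection of the candidate
  have hproj : (Submodule.orthogonalProjectionOnto V (w + t • (u - Pu)) : H) = w := by
    rw [map_add, map_smul, Submodule.orthogonalProjectionOnto_apply_of_mem_orthogonal hperp]
    simp [Submodule.orthogonalProjectionOnto_mem_subspace_eq_self ⟨w, hwV⟩]
  refine ⟨w + t • (u - Pu), ?_, hproj⟩
  -- inner product computations
  have hwperp : ⟪w, u - Pu⟫ = 0 := hperp w hwV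
  have hwv : ⟪w, v⟫ = ⟪w, Pv⟫ := by
    have h0 : ⟪w, v - Pv⟫ = 0 := hperpv w hwV
    rw [inner_sub_right] at h0; linarith
  have hPuPv : ⟪Pu, v⟫ = ⟪Pu, Pv⟫ := by
    have h0 : ⟪Pu, v - Pv⟫ = 0 := hperpv Pu (Submodule.orthogonalProjectionOnto V u).2
    rw [inner_sub_right] at h0; linarith
  have hPuperp : ⟪Pu, u - Pu⟫ = 0 := hperp Pu (Submodule.orthogonalProjectionOnto V u).2
  -- norm of the candidate
  have hnorm : ‖w + t • (u - Pu)‖ = t * ‖u‖ := by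
    have h1 : ‖w + t • (u - Pu)‖ ^ 2 = ‖w‖ ^ 2 + t ^ 2 * ‖u - Pu‖ ^ 2 := by
      rw [norm_add_sq_real, inner_smul_right, hwperp, norm_smul]
      simp [mul_pow, abs_of_nonneg htnn]
    have h2 : ‖u‖ ^ 2 = ‖Pu‖ ^ 2 + ‖u - Pu‖ ^ 2 := by
      have : u = Pu + (u - Pu) := by abel
      calc ‖u‖ ^ 2 = ‖Pu + (u - Pu)‖ ^ 2 := by rw [← this]
        _ = ‖Pu‖ ^ 2 + ‖u - Pu‖ ^ 2 := by
            rw [norm_add_sq_real, hPuperp]; ring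
    have hsq : ‖w + t • (u - Pu)‖ ^ 2 = (t * ‖u‖) ^ 2 := by
      rw [h1, mul_pow, h2]
      linear_combination (-(t * ‖Pu‖ + ‖w‖)) * htPu
    have hnn : (0:ℝ) ≤ t * ‖u‖ := mul_nonneg htnn (norm_nonneg _)
    nlinarith [norm_nonneg (w + t • (u - Pu)), hsq, hnn]
  -- the cone inequality
  show ⟪w + t • (u - Pu), v⟫ ≥ Real.cos φ * (‖w + t • (u - Pu)‖ * ‖v‖)
  have hinner : ⟪w + t • (u - Pu), v⟫ = ⟪w, Pv⟫ + t * (⟪u, v⟫ - ⟪Pu, Pv⟫) := by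
    rw [inner_add_left, inner_smul_left, inner_sub_left, hwv, hPuPv]
    simp [RCLike.conj_to_real]
  rw [hnorm, hinner]
  have key : t * ⟪u, v⟫ ≥ t * (Real.cos φ * (‖u‖ * ‖v‖)) :=
    mul_le_mul_of_nonneg_left hu htnn
  have h3 : t * ⟪Pu, Pv⟫ = Real.cos θ * (‖w‖ * ‖Pv‖) := by
    rw [hθu]; rw [← htPu]; ring
  nlinarith [hwin, key, h3]
end

section
/- Let H be a real Hilbert space, V a closed subspace with orthogonal projection P : H → V, a, v ∈ H, and φ ∈ [0, π] with 0 < ∠(v,V⊥) and φ < ∠(v,V⊥). Let φ₁ = arccos √((cos²φ − cos²∠(v,V⊥))/(1 − cos²∠(v,V⊥))) when ∠(v,V⊥) ∈ (0, π/2], and φ₁ = φ otherwise. Then the orthogonal projection of the cone C_H(a, v, φ) onto V equals the cone C_V(Pa, Pv, φ₁), i.e. P[C_H(a,v,φ)] = {y ∈ V : ⟨y − Pa, Pv⟩ ≥ cos φ₁ · ‖y − Pa‖‖Pv‖}. -/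
open scoped RealInnerProductSpace Classical

private lemma aux_cs (D q b r cn : ℝ) (hD : 0 ≤ D) (hq : 0 ≤ q) (hb : 0 ≤ b) (hr : 0 ≤ r)
    (hcn : 0 ≤ cn) (h : D ^ 2 + q ^ 2 = cn ^ 2) :
    D * b + q * r ≤ cn * Real.sqrt (b ^ 2 + r ^ 2) := by
  have h1 : (D * b + q * r) ^ 2 ≤ cn ^ 2 * (b ^ 2 + r ^ 2) := by
    nlinarith [sq_nonneg (D * r - q * b)]
  calc D * b + q * r = Real.sqrt ((D * b + q * r) ^ 2) := (Real.sqrt_sq (by positivity)).symm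
    _ ≤ Real.sqrt (cn ^ 2 * (b ^ 2 + r ^ 2)) := Real.sqrt_le_sqrt h1
    _ = cn * Real.sqrt (b ^ 2 + r ^ 2) := by
        rw [Real.sqrt_mul (sq_nonneg _), Real.sqrt_sq hcn]

private lemma aux_inner {H : Type*} [NormedAddCommGroup H] [InnerProductSpace ℝ H]
    (V : Submodule ℝ H) {y z pv w : H} (hy : y ∈ V) (hz : z ∈ Vᗮ) (hpv : pv ∈ V)
    (hw : w ∈ Vᗮ) : ⟪y + z, pv + w⟫ = ⟪y, pv⟫ + ⟪z, w⟫ := by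
  have h1 : ⟪y, w⟫ = 0 := Submodule.inner_right_of_mem_orthogonal hy hw
  have h2 : ⟪pv, z⟫ = 0 := Submodule.inner_right_of_mem_orthogonal hpv hz
  have h2' : ⟪z, pv⟫ = 0 := by rw [real_inner_comm]; exact h2
  rw [inner_add_left, inner_add_right, inner_add_right, h1, h2']; ring

private lemma aux_pyth {H : Type*} [NormedAddCommGroup H] [InnerProductSpace ℝ H]
    (V : Submodule ℝ H) {y z : H} (hy : y ∈ V) (hz : z ∈ Vᗮ) :
    ‖y + z‖ ^ 2 = ‖y‖ ^ 2 + ‖z‖ ^ 2 := by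
  rw [norm_add_sq_real, Submodule.inner_right_of_mem_orthogonal hy hz]; ring

set_option maxHeartbeats 1000000

/-- The angle between a vector `v` and the orthogonal complement of `V`:
`∠(v,V⊥) = arccos (‖v - P v‖ / ‖v‖)` for `v ≠ 0` and `V ≠ H`, with the conventions
`∠(v,V⊥) = π` when `v = 0` or `V = H` (note that it gives `0` when `V = {0}`, `v ≠ 0`). -/
noncomputable def angleToPerp {H : Type*} [NormedAddCommGroup H] [InnerProductSpace ℝ H]
    [CompleteSpace H] (V : Submodule ℝ H) [CompleteSpace V] (v : H) : ℝ :=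
  if v = 0 ∨ V = ⊤ then Real.pi
  else Real.arccos (‖v - (V.orthogonalProjectionOnto v : H)‖ / ‖v‖)

/-- If `0 ≤ φ ≤ π`, `0 < ∠(v,V⊥)` and `φ < ∠(v,V⊥)`, and `φ₁` is
`arccos √((cos²φ - cos²∠(v,V⊥)) / (1 - cos²∠(v,V⊥)))` when `∠(v,V⊥) ∈ (0, π/2]` and `φ`
otherwise, then `P[C_H(a,v,φ)] = C_V(P a, P v, φ₁)`. -/
theorem stmt8 {H : Type*} [NormedAddCommGroup H] [InnerProductSpace ℝ H] [CompleteSpace H]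
    (V : Submodule ℝ H) [CompleteSpace V]
    (a v : H) (φ : ℝ) (hφ0 : 0 ≤ φ) (hφπ : φ ≤ Real.pi)
    (hψ0 : 0 < angleToPerp V v) (hφψ : φ < angleToPerp V v)
    (φ₁ : ℝ)
    (hφ₁ : φ₁ = if 0 < angleToPerp V v ∧ angleToPerp V v ≤ Real.pi / 2 then
        Real.arccos (Real.sqrt ((Real.cos φ ^ 2 - Real.cos (angleToPerp V v) ^ 2) /
          (1 - Real.cos (angleToPerp V v) ^ 2)))
      else φ) :
    (fun u : H => (V.orthogonalProjectionOnto u : H)) ''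
        {u : H | ⟪u - a, v⟫ ≥ Real.cos φ * (‖u - a‖ * ‖v‖)} =
      {y : H | y ∈ V ∧ ⟪y - (V.orthogonalProjectionOnto a : H), (V.orthogonalProjectionOnto v : H)⟫ ≥
        Real.cos φ₁ * (‖y - (V.orthogonalProjectionOnto a : H)‖ *
          ‖(V.orthogonalProjectionOnto v : H)‖)} := by
  by_cases hdeg : v = 0 ∨ V = ⊤
  · have hψ : angleToPerp V v = Real.pi := by rw [angleToPerp, if_pos hdeg]
    have hφ₁' : Real.cos φ₁ = Real.cos φ := by
      rw [hφ₁, if_neg]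
      rw [hψ]
      rintro ⟨-, h2⟩
      linarith [Real.pi_pos]
    rcases hdeg with rfl | rfl
    · ext y
      simp only [Set.mem_image, Set.mem_setOf_eq]
      constructor
      · rintro ⟨u, -, rfl⟩
        refine ⟨SetLike.coe_mem _, ?_⟩
        simp [map_zero]
      · rintro ⟨hyV, -⟩
        exact ⟨y, by simp, Submodule.starProjection_eq_self_iff.2 hyV⟩
    · have hid : ∀ u : H, (((⊤ : Submodule ℝ H).orthogonalProjectionOnto u : H)) = u := fun u =>
        Submodule.starProjection_eq_self_iff.2 Submodule.mem_top
      ext y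
      simp only [Set.mem_image, Set.mem_setOf_eq, hid]
      constructor
      · rintro ⟨u, hu, rfl⟩
        exact ⟨Submodule.mem_top, by rw [hφ₁']; exact hu⟩
      · rintro ⟨-, hy⟩
        exact ⟨y, by rw [← hφ₁']; exact hy, rfl⟩
  · obtain ⟨hv0, hVtop⟩ := not_or.mp hdeg
    set pv : H := ↑(V.orthogonalProjectionOnto v) with hpvdef
    set pa : H := ↑(V.orthogonalProjectionOnto a) with hpadef
    set n : ℝ := ‖v‖ with hndef
    set q : ℝ := ‖v - pv‖ with hqdef
    set p : ℝ := ‖pv‖ with hpdef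
    set c : ℝ := Real.cos φ with hcdef
    have hpvmem : pv ∈ V := SetLike.coe_mem _
    have hperp : v - pv ∈ Vᗮ := Submodule.sub_starProjection_mem_orthogonal v
    have hn : (0:ℝ) < n := norm_pos_iff.2 hv0
    have hq0 : (0:ℝ) ≤ q := norm_nonneg _
    have hψeq : angleToPerp V v = Real.arccos (q / n) := by rw [angleToPerp, if_neg hdeg]
    have hk1 : q / n < 1 := Real.arccos_pos.mp (hψeq ▸ hψ0)
    have hqn : q < n := (div_lt_one hn).mp hk1
    have hpyth : n ^ 2 = p ^ 2 + q ^ 2 := by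
      have h := aux_pyth V hpvmem hperp
      rwa [add_sub_cancel] at h
    have hp2pos : (0:ℝ) < p ^ 2 := by
      nlinarith [mul_pos (sub_pos.2 hqn) (show (0:ℝ) < n + q by linarith)]
    have hp : (0:ℝ) < p := by nlinarith [norm_nonneg pv]
    have hcq : q < c * n := by
      have hqn0 : (0:ℝ) ≤ q / n := by positivity
      have h1 : Real.cos (Real.arccos (q / n)) < c :=
        Real.cos_lt_cos_of_nonneg_of_le_pi hφ0 (Real.arccos_le_pi _) (hψeq ▸ hφψ)
      rw [Real.cos_arccos (by linarith) hk1.le] at h1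
      exact (div_lt_iff₀ hn).mp h1
    have hc0 : (0:ℝ) < c := by
      by_contra h
      push_neg at h
      have h2 : c * n ≤ 0 * n := mul_le_mul_of_nonneg_right h hn.le
      rw [zero_mul] at h2
      linarith
    have hD2' : (0:ℝ) < c ^ 2 * n ^ 2 - q ^ 2 := by nlinarith
    set D : ℝ := Real.sqrt (c ^ 2 * n ^ 2 - q ^ 2) with hDdef
    have hD : 0 < D := Real.sqrt_pos.2 hD2'
    have hD2 : D ^ 2 = c ^ 2 * n ^ 2 - q ^ 2 := Real.sq_sqrt hD2'.le
    have hc1 : c ≤ 1 := Real.cos_le_one φ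
    have hDp : D ≤ p := by
      have h1 : c ^ 2 * n ^ 2 - q ^ 2 ≤ p ^ 2 := by
        nlinarith [sq_nonneg n, mul_le_mul_of_nonneg_left hc1 hc0.le]
      calc D ≤ Real.sqrt (p ^ 2) := Real.sqrt_le_sqrt h1
        _ = p := Real.sqrt_sq hp.le
    have hcos₁ : Real.cos φ₁ = D / p := by
      have hcond : 0 < angleToPerp V v ∧ angleToPerp V v ≤ Real.pi / 2 :=
        ⟨hψ0, by rw [hψeq]; exact Real.arccos_le_pi_div_two.2 (by positivity)⟩
      have hqn0 : (0:ℝ) ≤ q / n := by positivity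
      rw [hφ₁, if_pos hcond, hψeq, Real.cos_arccos (by linarith) hk1.le]
      have harg : (c ^ 2 - (q / n) ^ 2) / (1 - (q / n) ^ 2) = (D / p) ^ 2 := by
        have hp2 : p ^ 2 = n ^ 2 - q ^ 2 := by linarith
        have hne : n ^ 2 - q ^ 2 ≠ 0 := by rw [← hp2]; positivity
        field_simp
        linear_combination (c ^ 2 * n ^ 2 - q ^ 2) * hp2 - (n ^ 2 - q ^ 2) * hD2
      have hDp0 : (0:ℝ) ≤ D / p := by positivity
      rw [harg, Real.sqrt_sq (by positivity),
        Real.cos_arccos (by linarith) ((div_le_one hp).mpr hDp)]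
    have hDsum : D ^ 2 + q ^ 2 = (c * n) ^ 2 := by nlinarith
    ext y
    simp only [Set.mem_image, Set.mem_setOf_eq]
    constructor
    · rintro ⟨u, hu, rfl⟩
      refine ⟨SetLike.coe_mem _, ?_⟩
      have hQsub : (↑(V.orthogonalProjectionOnto u) : H) - pa = ↑(V.orthogonalProjectionOnto (u - a)) := by
        rw [map_sub]; rfl
      set y' : H := ↑(V.orthogonalProjectionOnto (u - a)) with hy'def
      set z : H := (u - a) - y' with hzdef
      have hy'V : y' ∈ V := SetLike.coe_mem _
      have hzperp : z ∈ Vᗮ := Submodule.sub_starProjection_mem_orthogonal (u - a)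
      have hwyz : u - a = y' + z := by rw [hzdef]; abel
      have hinner : ⟪u - a, v⟫ = ⟪y', pv⟫ + ⟪z, v - pv⟫ := by
        calc ⟪u - a, v⟫ = ⟪y' + z, pv + (v - pv)⟫ := by rw [← hwyz, add_sub_cancel]
          _ = ⟪y', pv⟫ + ⟪z, v - pv⟫ := aux_inner V hy'V hzperp hpvmem hperp
      have hCS : ⟪z, v - pv⟫ ≤ q * ‖z‖ := by
        have h := real_inner_le_norm z (v - pv)
        calc ⟪z, v - pv⟫ ≤ ‖z‖ * ‖v - pv‖ := h
          _ = q * ‖z‖ := by rw [mul_comm]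
      have hnormw : ‖u - a‖ = Real.sqrt (‖y'‖ ^ 2 + ‖z‖ ^ 2) := by
        rw [← aux_pyth V hy'V hzperp, ← hwyz, Real.sqrt_sq (norm_nonneg _)]
      have haux : D * ‖y'‖ + q * ‖z‖ ≤ c * n * Real.sqrt (‖y'‖ ^ 2 + ‖z‖ ^ 2) :=
        aux_cs D q ‖y'‖ ‖z‖ (c * n) hD.le hq0 (norm_nonneg _) (norm_nonneg _)
          (by positivity) hDsum
      have hu2 : c * n * Real.sqrt (‖y'‖ ^ 2 + ‖z‖ ^ 2) ≤ ⟪u - a, v⟫ := by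
        calc c * n * Real.sqrt (‖y'‖ ^ 2 + ‖z‖ ^ 2) = c * (‖u - a‖ * n) := by
              rw [hnormw]; ring
          _ ≤ ⟪u - a, v⟫ := hu
      have ht : D * ‖y'‖ ≤ ⟪y', pv⟫ := by linarith
      rw [hQsub, hcos₁]
      calc D / p * (‖y'‖ * p) = D * ‖y'‖ := by field_simp
        _ ≤ ⟪y', pv⟫ := ht
    · rintro ⟨hyV, hy⟩
      set y0 : H := y - pa with hy0def
      set b : ℝ := ‖y0‖ with hbdef
      have hy0V : y0 ∈ V := Submodule.sub_mem V hyV (SetLike.coe_mem _)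
      have ht : D * b ≤ ⟪y0, pv⟫ := by
        rw [hcos₁] at hy
        calc D * b = D / p * (b * p) := by field_simp
          _ ≤ ⟪y0, pv⟫ := hy
      set z : H := (b / D) • (v - pv) with hzdef
      have hzperp : z ∈ Vᗮ := Submodule.smul_mem _ _ hperp
      refine ⟨a + (y0 + z), ?_, ?_⟩
      · have hw : a + (y0 + z) - a = y0 + z := by abel
        rw [hw]
        have hinner : ⟪y0 + z, v⟫ = ⟪y0, pv⟫ + (b / D) * q ^ 2 := by
          calc ⟪y0 + z, v⟫ = ⟪y0 + z, pv + (v - pv)⟫ := by rw [add_sub_cancel]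
            _ = ⟪y0, pv⟫ + ⟪z, v - pv⟫ := aux_inner V hy0V hzperp hpvmem hperp
            _ = ⟪y0, pv⟫ + (b / D) * q ^ 2 := by
                rw [hzdef, real_inner_smul_left, real_inner_self_eq_norm_sq]
        have hzn : ‖z‖ = (b / D) * q := by
          rw [hzdef, norm_smul, Real.norm_eq_abs, abs_of_nonneg (by positivity)]
        have hw2 : ‖y0 + z‖ ^ 2 = (b * c * n / D) ^ 2 := by
          rw [aux_pyth V hy0V hzperp, hzn]
          field_simp
          linear_combination b ^ 2 * hD2
        have hwn : ‖y0 + z‖ = b * c * n / D := by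
          calc ‖y0 + z‖ = Real.sqrt (‖y0 + z‖ ^ 2) := (Real.sqrt_sq (norm_nonneg _)).symm
            _ = Real.sqrt ((b * c * n / D) ^ 2) := by rw [hw2]
            _ = b * c * n / D := Real.sqrt_sq (by positivity)
        have hkey : c * ((b * c * n / D) * n) = D * b + (b / D) * q ^ 2 := by
          field_simp
          linear_combination (-b) * hD2
        rw [hwn, hinner]
        · show Real.cos φ * (b * c * n / D * n) ≤ ⟪y0, pv⟫ + b / D * q ^ 2
          rw [← hcdef]
          linarith [hkey, ht]
      · show (↑(V.orthogonalProjectionOnto (a + (y0 + z))) : H) = y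
        have h1 : V.orthogonalProjectionOnto (a + (y0 + z)) =
            V.orthogonalProjectionOnto a + (V.orthogonalProjectionOnto y0 +
              (b / D) • V.orthogonalProjectionOnto (v - pv)) := by
          rw [hzdef, map_add, map_add, map_smul]
        rw [h1]
        push_cast
        rw [Submodule.coe_orthogonalProjectionOnto_apply V y0, Submodule.starProjection_eq_self_iff.2 hy0V,
          Submodule.orthogonalProjectionOnto_apply_of_mem_orthogonal hperp]
        simp [hy0def, hpadef]
end

section
/- Let H be a real Hilbert space, V a closed subspace with orthogonal projection P : H → V, a, v ∈ H, and φ ∈ (0, π/2) with φ = ∠(v,V⊥). Then P[C_H(a, v, φ)] = C°_V(Pa, Pv, π/2), i.e. the orthogonal projection of the cone C_H(a, v, φ) onto V is the union of {Pa} with the open half-space {y ∈ V : ⟨y − Pa, Pv⟩ > 0}. -/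
open scoped RealInnerProductSpace

/-- If `φ ∈ (0, π/2)` and `φ = ∠(v,V⊥) = arccos (‖v - P v‖ / ‖v‖)`, then
`P[C_H(a,v,φ)]` is the union of `{P a}` with the open half-space
`{y ∈ V : ⟨y - P a, P v⟩ > 0}`. -/
theorem stmt10 {H : Type*} [NormedAddCommGroup H] [InnerProductSpace ℝ H] [CompleteSpace H]
    (V : Submodule ℝ H) [CompleteSpace V]
    (a v : H) (φ : ℝ) (hφ0 : 0 < φ) (hφ2 : φ < Real.pi / 2)
    (hφψ : φ = Real.arccos (‖v - (V.orthogonalProjection v : H)‖ / ‖v‖)) :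
    (fun u : H => (V.orthogonalProjection u : H)) ''
        {u : H | ⟪u - a, v⟫ ≥ Real.cos φ * (‖u - a‖ * ‖v‖)} =
      {(V.orthogonalProjection a : H)} ∪
        {y : H | y ∈ V ∧
          0 < ⟪y - (V.orthogonalProjection a : H), (V.orthogonalProjection v : H)⟫} := by
  set P : H → H := fun u => (V.orthogonalProjection u : H) with hP
  set w : H := v - P v with hwdef
  have hwV : w ∈ Vᗮ := (V.sub_starProjection_mem_orthogonal v : v - P v ∈ Vᗮ)
  -- v ≠ 0
  have hv0 : v ≠ 0 := by
    intro h
    rw [h] at hφψ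
    simp [Real.arccos_zero] at hφψ
    have := Real.pi_pos
    linarith
  have hvpos : 0 < ‖v‖ := norm_pos_iff.mpr hv0
  -- Pythagoras
  have key : ∀ x : H, ‖x‖ ^ 2 = ‖P x‖ ^ 2 + ‖x - P x‖ ^ 2 := by
    intro x
    have h0 : ⟪P x, x - P x⟫ = 0 :=
      Submodule.inner_right_of_mem_orthogonal (V.orthogonalProjection x).2
        (V.sub_starProjection_mem_orthogonal x : x - P x ∈ Vᗮ)
    have h1 := norm_add_sq_real (P x) (x - P x)
    rw [add_sub_cancel, h0] at h1
    linarith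
  have hwle : ‖w‖ ≤ ‖v‖ := by
    nlinarith [key v, norm_nonneg (P v), norm_nonneg w, norm_nonneg v]
  have hcos : Real.cos φ = ‖w‖ / ‖v‖ := by
    rw [hφψ, Real.cos_arccos]
    · linarith [div_nonneg (norm_nonneg w) (norm_nonneg v)]
    · exact (div_le_one hvpos).mpr hwle
  have hcospos : 0 < Real.cos φ :=
    Real.cos_pos_of_mem_Ioo ⟨by linarith [Real.pi_pos], hφ2⟩
  have hw0 : 0 < ‖w‖ := by
    have := mul_pos hcospos hvpos
    rwa [hcos, div_mul_cancel₀ _ (ne_of_gt hvpos)] at this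
  -- inner product splitting
  have hsplit : ∀ x : H, ⟪x, v⟫ = ⟪P x, P v⟫ + ⟪x - P x, w⟫ := by
    intro x
    have h1 : ⟪P x, w⟫ = 0 :=
      Submodule.inner_right_of_mem_orthogonal (V.orthogonalProjection x).2 hwV
    have h2 : ⟪x - P x, P v⟫ = 0 :=
      Submodule.inner_left_of_mem_orthogonal (V.orthogonalProjection v).2
        (V.sub_starProjection_mem_orthogonal x : x - P x ∈ Vᗮ)
    have hx : x = P x + (x - P x) := by abel
    have hv' : v = P v + w := by rw [hwdef]; abel
    calc ⟪x, v⟫ = ⟪P x + (x - P x), P v + w⟫ := by rw [← hx, ← hv']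
      _ = ⟪P x, P v⟫ + ⟪P x, w⟫ + (⟪x - P x, P v⟫ + ⟪x - P x, w⟫) := by
          rw [inner_add_left, inner_add_right, inner_add_right]
      _ = ⟪P x, P v⟫ + ⟪x - P x, w⟫ := by rw [h1, h2]; ring
  -- the rewritten cone condition
  have hcone : ∀ u : H, (⟪u - a, v⟫ ≥ Real.cos φ * (‖u - a‖ * ‖v‖)) ↔
      ⟪u - a, v⟫ ≥ ‖w‖ * ‖u - a‖ := by
    intro u
    have h : Real.cos φ * (‖u - a‖ * ‖v‖) = ‖w‖ * ‖u - a‖ := by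
      rw [hcos]; field_simp
    rw [h]
  have hPsub : ∀ x y : H, P (x - y) = P x - P y := by
    intro x y; simp [hP, map_sub]
  ext y
  constructor
  · rintro ⟨u, hu, rfl⟩
    have hu' : ⟪u - a, v⟫ ≥ ‖w‖ * ‖u - a‖ := (hcone u).mp hu
    obtain ⟨x, hx⟩ : ∃ x, x = u - a := ⟨_, rfl⟩
    have hu'' : ⟪x, v⟫ ≥ ‖w‖ * ‖x‖ := by rw [hx]; exact hu'
    obtain ⟨q, hq⟩ : ∃ q, q = x - P x := ⟨_, rfl⟩
    have hCS : ⟪q, w⟫ ≤ ‖q‖ * ‖w‖ := real_inner_le_norm q w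
    have hkx : ‖x‖ ^ 2 = ‖P x‖ ^ 2 + ‖q‖ ^ 2 := by rw [hq]; exact key x
    have hqle : ‖q‖ ≤ ‖x‖ := by
      nlinarith [norm_nonneg (P x), norm_nonneg q, norm_nonneg x]
    have hsx : ⟪x, v⟫ = ⟪P x, P v⟫ + ⟪q, w⟫ := by rw [hq]; exact hsplit x
    have hc : ⟪P x, P v⟫ ≥ ‖w‖ * (‖x‖ - ‖q‖) := by nlinarith
    have hc0 : 0 ≤ ⟪P x, P v⟫ := by
      nlinarith [mul_nonneg hw0.le (sub_nonneg.mpr hqle)]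
    have hPx : P x = P u - P a := by rw [hx]; exact hPsub u a
    rcases hc0.lt_or_eq with hlt | heq
    · right
      refine ⟨(V.orthogonalProjection u).2, ?_⟩
      show 0 < ⟪(V.orthogonalProjection u : H) - (V.orthogonalProjection a : H), P v⟫
      rw [show (V.orthogonalProjection u : H) - (V.orthogonalProjection a : H) = P x from
        hPx.symm]
      exact hlt
    · left
      have h1 : ‖w‖ * (‖x‖ - ‖q‖) ≤ ‖w‖ * 0 := by rw [mul_zero]; linarith
      have hxq : ‖x‖ ≤ ‖q‖ := by linarith [le_of_mul_le_mul_left h1 hw0]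
      have h3 : ‖x‖ ^ 2 ≤ ‖q‖ ^ 2 := pow_le_pow_left₀ (norm_nonneg x) hxq 2
      have hP0 : ‖P x‖ ^ 2 = 0 := by linarith [sq_nonneg ‖P x‖]
      have hP0' : P x = 0 := by
        have := pow_eq_zero_iff (n := 2) (by norm_num) |>.mp hP0
        exact norm_eq_zero.mp this
      rw [hPx] at hP0'
      exact sub_eq_zero.mp hP0'
  · rintro (hy | ⟨hyV, hyc⟩)
    · refine ⟨a, ?_, hy.symm⟩
      simp [Set.mem_setOf_eq, sub_self, inner_zero_left, norm_zero]
    · obtain ⟨c, hc⟩ : ∃ c, c = ⟪y - P a, P v⟫ := ⟨_, rfl⟩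
      rw [← hc] at hyc
      obtain ⟨t, ht⟩ : ∃ t, t = ‖y - P a‖ ^ 2 / (2 * c) := ⟨_, rfl⟩
      have htnn : 0 ≤ t := by rw [ht]; positivity
      refine ⟨y + t • w + (a - P a), ?_, ?_⟩
      · rw [Set.mem_setOf_eq, hcone]
        have hdiff : y + t • w + (a - P a) - a = (y - P a) + t • w := by abel
        rw [hdiff]
        have h1 : ⟪y - P a, w⟫ = 0 :=
          Submodule.inner_right_of_mem_orthogonal
            (Submodule.sub_mem V hyV (V.orthogonalProjection a).2) hwV
        have h4 : ⟪w, P v⟫ = 0 :=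
          Submodule.inner_left_of_mem_orthogonal (V.orthogonalProjection v).2 hwV
        have hv' : v = P v + w := by simp [w]
        have h2 : ⟪(y - P a) + t • w, v⟫ = c + t * ‖w‖ ^ 2 := by
          rw [hv', inner_add_left, inner_add_right, inner_add_right, h1,
            real_inner_smul_left, real_inner_smul_left, h4,
            real_inner_self_eq_norm_sq, ← hc]
          ring
        rw [h2]
        have hnorm : ‖(y - P a) + t • w‖ ^ 2 = ‖y - P a‖ ^ 2 + t ^ 2 * ‖w‖ ^ 2 := by
          have h0 : ⟪y - P a, t • w⟫ = 0 := by
            rw [real_inner_smul_right, h1]; ring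
          have h5 := norm_add_sq_real (y - P a) (t • w)
          rw [h0, norm_smul, Real.norm_eq_abs, abs_of_nonneg htnn] at h5
          rw [h5]; ring
        have h2ct : 2 * c * t = ‖y - P a‖ ^ 2 := by
          rw [ht]; field_simp
        have hL : 0 < c + t * ‖w‖ ^ 2 := by
          have := mul_nonneg htnn (sq_nonneg ‖w‖)
          linarith
        have hsq : (‖w‖ * ‖(y - P a) + t • w‖) ^ 2 ≤ (c + t * ‖w‖ ^ 2) ^ 2 := by
          have e : (c + t * ‖w‖ ^ 2) ^ 2
              = c ^ 2 + (2 * c * t) * ‖w‖ ^ 2 + t ^ 2 * (‖w‖ ^ 2) ^ 2 := by ring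
          rw [mul_pow, hnorm, e, h2ct]
          have := sq_nonneg c
          linarith [sq_nonneg (‖w‖ * ‖y - P a‖)]
        exact le_of_pow_le_pow_left₀ two_ne_zero hL.le hsq
      · show (V.orthogonalProjection (y + t • w + (a - P a)) : H) = y
        have hPy : (V.orthogonalProjection y : H) = y :=
          V.starProjection_eq_self_iff.mpr hyV
        have hPw : V.orthogonalProjection w = 0 :=
          V.orthogonalProjectionOnto_apply_of_mem_orthogonal hwV
        have hPPa : (V.orthogonalProjection (P a) : H) = P a :=
          V.starProjection_eq_self_iff.mpr (V.orthogonalProjection a).2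
        rw [map_add, map_add, map_sub, map_smul, Submodule.coe_add, Submodule.coe_add,
          Submodule.coe_sub, Submodule.coe_smul, hPy, hPPa, hPw]
        simp
        exact sub_self _
end

section
/- Let H be a real Hilbert space, V a closed subspace with orthogonal projection P : H → V, u, v ∈ H, and α ∈ (0, 1). Write v₁ = Pv, v₂ = v − Pv, u₁ = Pu. If ‖v₂‖ < (α/√(1 − α²))‖v₁‖ and ⟨u₁, v₁⟩ < √((α²‖v‖² − ‖v₂‖²)/(‖v‖² − ‖v₂‖²)) · ‖u₁‖‖v₁‖, then ⟨u, v⟩ < α‖u‖‖v‖. -/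
open scoped RealInnerProductSpace

set_option maxHeartbeats 2000000 in
/-- Write `v₁ = P v`, `v₂ = v - P v`, `u₁ = P u`.  If `α ∈ (0,1)`,
`‖v₂‖ < (α/√(1-α²)) ‖v₁‖` and
`⟨u₁, v₁⟩ < √((α²‖v‖² - ‖v₂‖²)/(‖v‖² - ‖v₂‖²)) ‖u₁‖ ‖v₁‖`, then
`⟨u, v⟩ < α ‖u‖ ‖v‖`. -/
theorem stmt14 {H : Type*} [NormedAddCommGroup H] [InnerProductSpace ℝ H] [CompleteSpace H]
    (V : Submodule ℝ H) [CompleteSpace V]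
    (u v : H) (α : ℝ) (hα0 : 0 < α) (hα1 : α < 1)
    (h1 : ‖v - (Submodule.orthogonalProjection V v : H)‖ <
      α / Real.sqrt (1 - α ^ 2) * ‖(Submodule.orthogonalProjection V v : H)‖)
    (h2 : ⟪(Submodule.orthogonalProjection V u : H), (Submodule.orthogonalProjection V v : H)⟫ <
      Real.sqrt ((α ^ 2 * ‖v‖ ^ 2 - ‖v - (Submodule.orthogonalProjection V v : H)‖ ^ 2) /
          (‖v‖ ^ 2 - ‖v - (Submodule.orthogonalProjection V v : H)‖ ^ 2)) *
        (‖(Submodule.orthogonalProjection V u : H)‖ * ‖(Submodule.orthogonalProjection V v : H)‖)) :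
    ⟪u, v⟫ < α * (‖u‖ * ‖v‖) := by
  set pu : H := (Submodule.orthogonalProjection V u : H) with hpu
  set pv : H := (Submodule.orthogonalProjection V v : H) with hpv
  have hpu_mem : pu ∈ V := (Submodule.orthogonalProjection V u).2
  have hpv_mem : pv ∈ V := (Submodule.orthogonalProjection V v).2
  have hu2 : u - pu ∈ Vᗮ := Submodule.sub_starProjection_mem_orthogonal (K := V) u
  have hv2 : v - pv ∈ Vᗮ := Submodule.sub_starProjection_mem_orthogonal (K := V) v
  have o1 : ⟪u - pu, pv⟫ = 0 := by
    rw [real_inner_comm]; exact (Submodule.mem_orthogonal V (u - pu)).mp hu2 pv hpv_mem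
  have o2 : ⟪pu, v - pv⟫ = 0 :=
    (Submodule.mem_orthogonal V (v - pv)).mp hv2 pu hpu_mem
  have o3 : ⟪pu, u - pu⟫ = 0 :=
    (Submodule.mem_orthogonal V (u - pu)).mp hu2 pu hpu_mem
  have o4 : ⟪pv, v - pv⟫ = 0 :=
    (Submodule.mem_orthogonal V (v - pv)).mp hv2 pv hpv_mem
  clear_value pu pv
  set a := ‖pu‖ with ha
  set b := ‖u - pu‖ with hb
  set c := ‖pv‖ with hc
  set d := ‖v - pv‖ with hd
  have ha0 : 0 ≤ a := norm_nonneg _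
  have hb0 : 0 ≤ b := norm_nonneg _
  have hc0 : 0 ≤ c := norm_nonneg _
  have hd0 : 0 ≤ d := norm_nonneg _
  clear_value a b c d
  have key : ⟪u, v⟫ = ⟪pu, pv⟫ + ⟪u - pu, v - pv⟫ := by
    have hu : u = pu + (u - pu) := by abel
    have hv : v = pv + (v - pv) := by abel
    calc ⟪u, v⟫ = ⟪pu + (u - pu), pv + (v - pv)⟫ := by rw [← hu, ← hv]
      _ = ⟪pu, pv⟫ + ⟪u - pu, v - pv⟫ := by
          rw [inner_add_left, inner_add_right, inner_add_right, o1, o2]; ring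
  have pythu : ‖u‖ ^ 2 = a ^ 2 + b ^ 2 := by
    have hu : u = pu + (u - pu) := by abel
    calc ‖u‖ ^ 2 = ‖pu + (u - pu)‖ ^ 2 := by rw [← hu]
      _ = a ^ 2 + b ^ 2 := by
          rw [norm_add_sq_real, o3, ha, hb]; ring
  have pythv : ‖v‖ ^ 2 = c ^ 2 + d ^ 2 := by
    have hv : v = pv + (v - pv) := by abel
    calc ‖v‖ ^ 2 = ‖pv + (v - pv)‖ ^ 2 := by rw [← hv]
      _ = c ^ 2 + d ^ 2 := by
          rw [norm_add_sq_real, o4, hc, hd]; ring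
  -- from h1
  have hα2 : (0:ℝ) < 1 - α ^ 2 := by nlinarith
  have hs1 : Real.sqrt (1 - α ^ 2) > 0 := Real.sqrt_pos.mpr hα2
  have hs1sq : Real.sqrt (1 - α ^ 2) ^ 2 = 1 - α ^ 2 := Real.sq_sqrt hα2.le
  have hcpos : 0 < c := by
    by_contra h
    push_neg at h
    have : c = 0 := le_antisymm h hc0
    rw [this, mul_zero] at h1
    exact absurd h1 (not_lt.mpr hd0)
  have h1' : Real.sqrt (1 - α ^ 2) * d < α * c := by
    have := mul_lt_mul_of_pos_left h1 hs1
    calc Real.sqrt (1 - α ^ 2) * d < Real.sqrt (1 - α ^ 2) * (α / Real.sqrt (1 - α ^ 2) * c) := this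
      _ = α * c := by field_simp
  have hNpos : 0 < α ^ 2 * ‖v‖ ^ 2 - d ^ 2 := by
    have : (1 - α ^ 2) * d ^ 2 < α ^ 2 * c ^ 2 := by
      nlinarith [mul_nonneg hs1.le hd0, mul_nonneg hα0.le hc0]
    nlinarith [pythv]
  set N := α ^ 2 * ‖v‖ ^ 2 - d ^ 2 with hN
  clear_value N
  have hdenom : ‖v‖ ^ 2 - d ^ 2 = c ^ 2 := by rw [pythv]; ring
  have hsqrt_eq : Real.sqrt (N / (‖v‖ ^ 2 - d ^ 2)) = Real.sqrt N / c := by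
    rw [hdenom, Real.sqrt_div hNpos.le, Real.sqrt_sq hc0]
  set sq := Real.sqrt N with hsq
  have hsq0 : 0 ≤ sq := Real.sqrt_nonneg _
  have hsqsq : sq ^ 2 = N := Real.sq_sqrt hNpos.le
  clear_value sq
  have h2' : ⟪pu, pv⟫ < a * sq := by
    have : Real.sqrt (N / (‖v‖ ^ 2 - d ^ 2)) * (a * c) = a * sq := by
      rw [hsqrt_eq]; field_simp
    calc ⟪pu, pv⟫ < Real.sqrt (N / (‖v‖ ^ 2 - d ^ 2)) * (a * c) := h2
      _ = a * sq := this
  have hcs : ⟪u - pu, v - pv⟫ ≤ b * d := by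
    rw [hb, hd]; exact real_inner_le_norm (u - pu) (v - pv)
  have hfinal : a * sq + b * d ≤ α * (‖u‖ * ‖v‖) := by
    have hnu : 0 ≤ ‖u‖ := norm_nonneg _
    have hnv : 0 ≤ ‖v‖ := norm_nonneg _
    have hY0 : 0 ≤ α * (‖u‖ * ‖v‖) := mul_nonneg hα0.le (mul_nonneg hnu hnv)
    have hX0 : 0 ≤ a * sq + b * d :=
      add_nonneg (mul_nonneg ha0 hsq0) (mul_nonneg hb0 hd0)
    have hsqY : (a * sq + b * d) ^ 2 ≤ (α * (‖u‖ * ‖v‖)) ^ 2 := by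
      have expand : (α * (‖u‖ * ‖v‖)) ^ 2 = (a ^ 2 + b ^ 2) * (sq ^ 2 + d ^ 2) := by
        rw [← pythu]
        have : sq ^ 2 + d ^ 2 = α ^ 2 * ‖v‖ ^ 2 := by rw [hsqsq, hN]; ring
        rw [this]; ring
      have idq : (a ^ 2 + b ^ 2) * (sq ^ 2 + d ^ 2) - (a * sq + b * d) ^ 2
          = (a * d - b * sq) ^ 2 := by ring
      have := sq_nonneg (a * d - b * sq)
      linarith [expand, idq, this]
    calc a * sq + b * d = Real.sqrt ((a * sq + b * d) ^ 2) := (Real.sqrt_sq hX0).symm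
      _ ≤ Real.sqrt ((α * (‖u‖ * ‖v‖)) ^ 2) := Real.sqrt_le_sqrt hsqY
      _ = α * (‖u‖ * ‖v‖) := Real.sqrt_sq hY0
  calc ⟪u, v⟫ = ⟪pu, pv⟫ + ⟪u - pu, v - pv⟫ := key
    _ < a * sq + b * d := by linarith
    _ ≤ α * (‖u‖ * ‖v‖) := hfinal
end

section
/- Let α ∈ (0, 1) and t ∈ ℝ with 1 − α² ≤ t ≤ 1. Then for every u ∈ L²((0,1)) (real-valued, square integrable with respect to Lebesgue measure) satisfying ∫₀¹ u ≥ α·√(∫₀¹ u²), one has ∫₀ᵗ u ≥ √(t − 1 + α²)·√(∫₀ᵗ u²); in particular ∫₀ᵗ u ≥ 0. -/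
open MeasureTheory

lemma cs_aux (s : Set ℝ) (u : ℝ → ℝ) (hfin : volume s ≠ ⊤)
    (hu : MemLp u 2 (volume.restrict s)) :
    ∫ x in s, u x ≤ Real.sqrt (volume s).toReal * Real.sqrt (∫ x in s, (u x) ^ 2) := by
  haveI : IsFiniteMeasure (volume.restrict s) := by
    constructor
    rw [Measure.restrict_apply_univ]
    exact hfin.lt_top
  have hint : Integrable u (volume.restrict s) := hu.integrable one_le_two
  have h1 : (∫ x in s, u x) ≤ ∫ x in s, |u x| :=
    integral_mono hint hint.abs fun x => le_abs_self _
  have hpq : Real.HolderConjugate 2 2 := Real.HolderConjugate.two_two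
  have habs : MemLp (fun x => |u x|) (ENNReal.ofReal 2) (volume.restrict s) := by
    rw [show ENNReal.ofReal 2 = 2 by norm_num]
    exact hu.abs
  have hone : MemLp (fun _ : ℝ => (1 : ℝ)) (ENNReal.ofReal 2) (volume.restrict s) :=
    memLp_const 1
  have h2 := integral_mul_le_Lp_mul_Lq_of_nonneg hpq
    (Filter.Eventually.of_forall fun x => abs_nonneg (u x))
    (Filter.Eventually.of_forall fun _ => zero_le_one) habs hone
  have e1 : ∫ x in s, |u x| * 1 = ∫ x in s, |u x| := by simp
  have e2 : ∫ x in s, |u x| ^ (2 : ℝ) = ∫ x in s, (u x) ^ 2 := by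
    refine integral_congr_ae (Filter.Eventually.of_forall fun x => ?_)
    show |u x| ^ (2 : ℝ) = u x ^ 2
    rw [show (2 : ℝ) = ((2 : ℕ) : ℝ) by norm_num, Real.rpow_natCast, sq_abs]
  have e3 : ∫ x in s, (1 : ℝ) ^ (2 : ℝ) = (volume s).toReal := by
    simp [Measure.restrict_apply_univ, Measure.real]
  rw [e1, e2, e3] at h2
  calc (∫ x in s, u x) ≤ ∫ x in s, |u x| := h1
    _ ≤ (∫ x in s, (u x) ^ 2) ^ (1 / (2:ℝ)) * ((volume s).toReal) ^ (1 / (2:ℝ)) := h2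
    _ = Real.sqrt (volume s).toReal * Real.sqrt (∫ x in s, (u x) ^ 2) := by
        rw [← Real.sqrt_eq_rpow, ← Real.sqrt_eq_rpow, mul_comm]

/-- Let `α ∈ (0,1)` and `1 - α² ≤ t ≤ 1`.  For every real-valued
`u ∈ L²((0,1))` with `∫₀¹ u ≥ α √(∫₀¹ u²)` one has
`∫₀ᵗ u ≥ √(t - 1 + α²) √(∫₀ᵗ u²)`; in particular `∫₀ᵗ u ≥ 0`. -/
theorem stmt17 (α t : ℝ) (hα0 : 0 < α) (hα1 : α < 1)
    (ht1 : 1 - α ^ 2 ≤ t) (ht2 : t ≤ 1)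
    (u : ℝ → ℝ) (hu : MemLp u 2 (volume.restrict (Set.Ioo (0 : ℝ) 1)))
    (h : (∫ x in Set.Ioo (0 : ℝ) 1, u x) ≥
      α * Real.sqrt (∫ x in Set.Ioo (0 : ℝ) 1, (u x) ^ 2)) :
    (∫ x in Set.Ioo (0 : ℝ) t, u x) ≥
        Real.sqrt (t - 1 + α ^ 2) * Real.sqrt (∫ x in Set.Ioo (0 : ℝ) t, (u x) ^ 2) ∧
      0 ≤ ∫ x in Set.Ioo (0 : ℝ) t, u x := by
  have hα2 : α ^ 2 < 1 := by nlinarith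
  have ht0 : 0 < t := by nlinarith
  have hsplit : Set.Ioo (0:ℝ) 1 = Set.Ioo 0 t ∪ Set.Ico t 1 :=
    (Set.Ioo_union_Ico_eq_Ioo ht0 ht2).symm
  have hdisj : Disjoint (Set.Ioo (0:ℝ) t) (Set.Ico t 1) :=
    Set.disjoint_left.2 fun x hx hx' => absurd hx.2 (not_lt.2 hx'.1)
  have hm2 : MeasurableSet (Set.Ico t (1:ℝ)) := measurableSet_Ico
  have hs1sub : Set.Ioo (0:ℝ) t ⊆ Set.Ioo 0 1 := Set.Ioo_subset_Ioo le_rfl ht2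
  have hs2sub : Set.Ico t (1:ℝ) ⊆ Set.Ioo 0 1 := fun x hx => ⟨lt_of_lt_of_le ht0 hx.1, hx.2⟩
  haveI : IsFiniteMeasure (volume.restrict (Set.Ioo (0:ℝ) 1)) := by
    constructor
    rw [Measure.restrict_apply_univ]
    simp
  have hint : IntegrableOn u (Set.Ioo (0:ℝ) 1) := hu.integrable one_le_two
  have hint2 : IntegrableOn (fun x => u x ^ 2) (Set.Ioo (0:ℝ) 1) := hu.integrable_sq
  have hIu : ∫ x in Set.Ioo (0:ℝ) 1, u x
      = (∫ x in Set.Ioo (0:ℝ) t, u x) + ∫ x in Set.Ico t (1:ℝ), u x := by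
    rw [hsplit]
    exact setIntegral_union hdisj hm2 (hint.mono_set hs1sub) (hint.mono_set hs2sub)
  have hIu2 : ∫ x in Set.Ioo (0:ℝ) 1, (u x) ^ 2
      = (∫ x in Set.Ioo (0:ℝ) t, (u x) ^ 2) + ∫ x in Set.Ico t (1:ℝ), (u x) ^ 2 := by
    rw [hsplit]
    exact setIntegral_union hdisj hm2 (hint2.mono_set hs1sub) (hint2.mono_set hs2sub)
  have hu2 : MemLp u 2 (volume.restrict (Set.Ico t (1:ℝ))) :=
    hu.mono_measure (Measure.restrict_mono hs2sub le_rfl)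
  have hcs := cs_aux (Set.Ico t 1) u (by simp) hu2
  have hvol : (volume (Set.Ico t (1:ℝ))).toReal = 1 - t := by
    rw [Real.volume_Ico, ENNReal.toReal_ofReal (by linarith)]
  rw [hvol] at hcs
  set A := ∫ x in Set.Ioo (0:ℝ) t, u x with hA
  set B := ∫ x in Set.Ico t (1:ℝ), u x with hB
  set E1 := ∫ x in Set.Ioo (0:ℝ) t, (u x) ^ 2 with hE1
  set E2 := ∫ x in Set.Ico t (1:ℝ), (u x) ^ 2 with hE2
  have hE1n : 0 ≤ E1 := integral_nonneg fun x => sq_nonneg _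
  have hE2n : 0 ≤ E2 := integral_nonneg fun x => sq_nonneg _
  rw [hIu, hIu2] at h
  set p := Real.sqrt E1 with hp
  set q := Real.sqrt E2 with hq
  set x := Real.sqrt (t - 1 + α ^ 2) with hx
  set y := Real.sqrt (1 - t) with hy
  set S := Real.sqrt (E1 + E2) with hS
  have hpn : 0 ≤ p := Real.sqrt_nonneg _
  have hqn : 0 ≤ q := Real.sqrt_nonneg _
  have hxn : 0 ≤ x := Real.sqrt_nonneg _
  have hyn : 0 ≤ y := Real.sqrt_nonneg _
  have hSn : 0 ≤ S := Real.sqrt_nonneg _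
  have hp2 : p ^ 2 = E1 := Real.sq_sqrt hE1n
  have hq2 : q ^ 2 = E2 := Real.sq_sqrt hE2n
  have hx2 : x ^ 2 = t - 1 + α ^ 2 := Real.sq_sqrt (by linarith)
  have hy2 : y ^ 2 = 1 - t := Real.sq_sqrt (by linarith)
  have hS2 : S ^ 2 = E1 + E2 := Real.sq_sqrt (by linarith)
  -- key: α * S ≥ x * p + y * q
  have hkey : x * p + y * q ≤ α * S := by
    nlinarith [sq_nonneg (y * p - x * q), sq_nonneg (α * S + x * p + y * q),
      mul_nonneg hxn hpn, mul_nonneg hyn hqn, mul_nonneg (mul_nonneg hxn hpn) (mul_nonneg hyn hqn),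
      mul_nonneg hα0.le hSn]
  have hmain : A ≥ x * p := by
    have : A + B ≥ α * S := h
    nlinarith [hcs]
  exact ⟨hmain, le_trans (mul_nonneg hxn hpn) hmain⟩
end

section
/- Let α ∈ (0, 1) and t ∈ ℝ with 0 < t < 1 − α². Then there exists u ∈ L²((0,1)) (real-valued, square integrable with respect to Lebesgue measure) such that ∫₀¹ u ≥ α·√(∫₀¹ u²) and ∫₀ᵗ u < 0. Combined with the case t ≥ 1 − α², this shows that t = 1 − α² is the smallest t > 0 such that the condition ∫₀¹ u ≥ α·√(∫₀¹ u²) forces ∫₀ᵗ u ≥ 0 for all u ∈ L²((0,1)). -/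
open MeasureTheory

lemma stmt18_int_const (a c d : ℝ) (hcd : c ≤ d) :
    IntegrableOn (fun _ : ℝ => a) (Set.Ioo c d) := by
  apply (integrableOn_const_iff).mpr; right; simp [Real.volume_Ioo]

lemma stmt18_int_eval (f : ℝ → ℝ) (a c d : ℝ) (hcd : c ≤ d)
    (h : ∀ x ∈ Set.Ioo c d, f x = a) :
    ∫ x in Set.Ioo c d, f x = (d - c) * a := by
  rw [setIntegral_congr_fun measurableSet_Ioo h,
    setIntegral_const, Real.volume_real_Ioo_of_le hcd, smul_eq_mul]

lemma stmt18_int_eval' (f : ℝ → ℝ) (a c d : ℝ) (hcd : c ≤ d)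
    (h : ∀ x ∈ Set.Ico c d, f x = a) :
    ∫ x in Set.Ico c d, f x = (d - c) * a := by
  rw [setIntegral_congr_fun measurableSet_Ico h,
    setIntegral_const, Real.volume_real_Ico_of_le hcd, smul_eq_mul]

lemma stmt18_int_on (f : ℝ → ℝ) (a c d : ℝ) (hcd : c ≤ d)
    (h : ∀ x ∈ Set.Ioo c d, f x = a) :
    IntegrableOn f (Set.Ioo c d) :=
  (stmt18_int_const a c d hcd).congr_fun (fun x hx => (h x hx).symm) measurableSet_Ioo

lemma stmt18_int_on' (f : ℝ → ℝ) (a c d : ℝ) (hcd : c ≤ d)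
    (h : ∀ x ∈ Set.Ico c d, f x = a) :
    IntegrableOn f (Set.Ico c d) := by
  refine IntegrableOn.congr_fun ?_ (fun x hx => (h x hx).symm) measurableSet_Ico
  apply (integrableOn_const_iff).mpr; right; simp [Real.volume_Ico]

lemma stmt18_split (c d e : ℝ) (f : ℝ → ℝ) (hcd : c < d) (hde : d ≤ e)
    (h1 : IntegrableOn f (Set.Ioo c d)) (h2 : IntegrableOn f (Set.Ico d e)) :
    ∫ x in Set.Ioo c e, f x = (∫ x in Set.Ioo c d, f x) + ∫ x in Set.Ico d e, f x := by
  rw [← Set.Ioo_union_Ico_eq_Ioo hcd hde,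
    setIntegral_union ((Set.Iio_disjoint_Ici le_rfl).mono Set.Ioo_subset_Iio_self
      Set.Ico_subset_Ici_self) measurableSet_Ico h1 h2]

/-- Let `α ∈ (0,1)` and `0 < t < 1 - α²`.  Then there exists a
real-valued `u ∈ L²((0,1))` with `∫₀¹ u ≥ α √(∫₀¹ u²)` and `∫₀ᵗ u < 0`; hence
`t = 1 - α²` is the smallest `t > 0` for which `∫₀¹ u ≥ α √(∫₀¹ u²)` forces
`∫₀ᵗ u ≥ 0`. -/
theorem stmt18 (α t : ℝ) (hα0 : 0 < α) (hα1 : α < 1)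
    (ht0 : 0 < t) (ht1 : t < 1 - α ^ 2) :
    ∃ u : ℝ → ℝ, MemLp u 2 (volume.restrict (Set.Ioo (0 : ℝ) 1)) ∧
      (∫ x in Set.Ioo (0 : ℝ) 1, u x) ≥
        α * Real.sqrt (∫ x in Set.Ioo (0 : ℝ) 1, (u x) ^ 2) ∧
      (∫ x in Set.Ioo (0 : ℝ) t, u x) < 0 := by
  have ht1' : t < 1 := by nlinarith
  set s : ℝ := Real.sqrt (1 - t) with hs
  have hs2 : s ^ 2 = 1 - t := Real.sq_sqrt (by linarith)
  have hspos : 0 < s := Real.sqrt_pos.mpr (by linarith)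
  have hsα : α < s := by nlinarith
  set ε : ℝ := s * (s - α) / (t + α + 1) with hε
  have hεpos : 0 < ε := div_pos (by nlinarith) (by linarith)
  have hεdef : ε * (t + α + 1) = s * (s - α) := by
    rw [hε]; field_simp
  set u : ℝ → ℝ := fun x => if x < t then -ε else 1 with hu
  have hut : ∀ x ∈ Set.Ioo (0:ℝ) t, u x = -ε := fun x hx => if_pos hx.2
  have hut1 : ∀ x ∈ Set.Ico t (1:ℝ), u x = 1 := fun x hx => if_neg (not_lt.mpr hx.1)
  have hut2 : ∀ x ∈ Set.Ioo (0:ℝ) t, (u x) ^ 2 = ε ^ 2 := by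
    intro x hx; rw [hut x hx]; ring
  have hut12 : ∀ x ∈ Set.Ico t (1:ℝ), (u x) ^ 2 = 1 := by
    intro x hx; rw [hut1 x hx]; ring
  -- the three integrals
  have hI3 : ∫ x in Set.Ioo (0:ℝ) t, u x = -(ε * t) := by
    rw [stmt18_int_eval u (-ε) 0 t ht0.le hut]; ring
  have hI1 : ∫ x in Set.Ioo (0:ℝ) 1, u x = -(ε * t) + (1 - t) := by
    rw [stmt18_split 0 t 1 u ht0 ht1'.le
      (stmt18_int_on u (-ε) 0 t ht0.le hut) (stmt18_int_on' u 1 t 1 ht1'.le hut1),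
      hI3, stmt18_int_eval' u 1 t 1 ht1'.le hut1]; ring
  have hI2 : ∫ x in Set.Ioo (0:ℝ) 1, (u x) ^ 2 = ε ^ 2 * t + (1 - t) := by
    rw [stmt18_split 0 t 1 (fun x => (u x) ^ 2) ht0 ht1'.le
      (stmt18_int_on _ (ε ^ 2) 0 t ht0.le hut2) (stmt18_int_on' _ 1 t 1 ht1'.le hut12),
      stmt18_int_eval _ (ε ^ 2) 0 t ht0.le hut2,
      stmt18_int_eval' _ 1 t 1 ht1'.le hut12]; ring
  refine ⟨u, ?_, ?_, ?_⟩
  · haveI : Fact (volume (Set.Ioo (0:ℝ) 1) < ⊤) := ⟨by simp [Real.volume_Ioo]⟩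
    apply MemLp.of_bound ((Measurable.ite (measurableSet_Iio) measurable_const
      measurable_const).aestronglyMeasurable) (max |ε| 1)
    filter_upwards with x
    by_cases h : x < t <;> simp [hu, h, abs_neg, le_max_left, le_max_right, le_max_iff]
  · rw [hI1, hI2]
    have hsqrt : Real.sqrt (ε ^ 2 * t + (1 - t)) ≤ ε + s := by
      have h1 : ε ^ 2 * t + (1 - t) ≤ (ε + s) ^ 2 := by nlinarith
      calc Real.sqrt (ε ^ 2 * t + (1 - t)) ≤ Real.sqrt ((ε + s) ^ 2) :=
            Real.sqrt_le_sqrt h1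
        _ = ε + s := Real.sqrt_sq (by positivity)
    have h2 : α * Real.sqrt (ε ^ 2 * t + (1 - t)) ≤ α * (ε + s) :=
      mul_le_mul_of_nonneg_left hsqrt hα0.le
    have h3 : α * (ε + s) ≤ -(ε * t) + (1 - t) := by nlinarith
    linarith
  · rw [hI3]; nlinarith
end
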